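/- arXiv:1605.06072 — 8 statements merged into one kernel-verified Lean document; each statement's English description precedes it below -/
import Mathlib

section
/- Let (c_k) be the sequence of reals defined by c_1 = 2 and c_k = c_{k-1} + 1 + sqrt(1 + 2 c_{k-1}) for k ≥ 2. Then for every integer k ≥ 1 one has k^2/2 ≤ c_k ≤ 2 k^2. -/
/-- For the sequence `c` defined by `c 1 = 2` and
`c k = c (k-1) + 1 + √(1 + 2 c (k-1))` for `k ≥ 2`, we have `k²/2 ≤ c k ≤ 2 k²` for all `k ≥ 1`. -/
theorem stmt_0 (c : ℕ → ℝ) (h1 : c 1 = 2)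
    (hrec : ∀ k : ℕ, 2 ≤ k → c k = c (k - 1) + 1 + Real.sqrt (1 + 2 * c (k - 1))) :
    ∀ k : ℕ, 1 ≤ k → (k : ℝ) ^ 2 / 2 ≤ c k ∧ c k ≤ 2 * (k : ℝ) ^ 2 := by
  intro k hk
  induction k, hk using Nat.le_induction with
  | base => rw [h1]; norm_num
  | succ n hn ih =>
    have hc := hrec (n + 1) (by omega)
    simp only [Nat.add_sub_cancel] at hc
    obtain ⟨hl, hu⟩ := ih
    have hn1 : (1 : ℝ) ≤ n := by exact_mod_cast hn
    have hsl : (n : ℝ) ≤ Real.sqrt (1 + 2 * c n) := by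
      rw [show (n : ℝ) = Real.sqrt ((n : ℝ) ^ 2) from (Real.sqrt_sq (by positivity)).symm]
      apply Real.sqrt_le_sqrt; nlinarith
    have hsu : Real.sqrt (1 + 2 * c n) ≤ 1 + 2 * n := by
      rw [show (1 + 2 * (n : ℝ)) = Real.sqrt ((1 + 2 * (n : ℝ)) ^ 2) from
        (Real.sqrt_sq (by positivity)).symm]
      apply Real.sqrt_le_sqrt; nlinarith
    constructor
    · rw [hc]; push_cast; nlinarith
    · rw [hc]; push_cast; nlinarith
end

section
/- Define reals ρ_{k,N} for integers 0 ≤ k ≤ N by: ρ_{0,N} = 0 for all N ≥ 0, ρ_{k,k} = k/2 for all k ≥ 1, and ρ_{k,N} = ρ_{k,N-1} − (ρ_{k,N-1} − ρ_{k-1,N-1})^2/2 for N > k ≥ 1. Let (c_k) be defined by c_1 = 2 and c_k = c_{k-1} + 1 + sqrt(1 + 2 c_{k-1}) for k ≥ 2. Then for every fixed integer k ≥ 1, lim_{N→∞} N · ρ_{k,N} = c_k. -/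
open Filter Finset

lemma harm_div : Tendsto (fun n => ∑ i ∈ Finset.range n, (1:ℝ)/i) atTop atTop := by
  rw [← not_summable_iff_tendsto_nat_atTop_of_nonneg (fun i => by positivity)]
  exact Real.not_summable_one_div_natCast

lemma no_perma_high (t : ℕ → ℝ) (η A : ℝ) (hη : 0 < η) (M : ℕ)
    (hbd : ∀ N, M ≤ N → A ≤ t N)
    (hstep : ∀ N, M ≤ N → t (N+1) ≤ t N - η/N) : False := by
  have tele : ∀ N, M ≤ N →
      t N ≤ t M - η * ((∑ i ∈ range N, (1:ℝ)/i) - ∑ i ∈ range M, (1:ℝ)/i) := by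
    intro N hN
    induction N, hN using Nat.le_induction with
    | base => simp
    | succ n hn ih =>
      have h1 := hstep n hn
      rw [Finset.sum_range_succ]
      have h2 : η / n = η * (1/n) := by ring
      linarith
  obtain ⟨N, hN1, hN2⟩ : ∃ N, M ≤ N ∧
      (t M - A)/η + (∑ i ∈ range M, (1:ℝ)/i) + 1 ≤ ∑ i ∈ range N, (1:ℝ)/i := by
    have := harm_div.eventually_ge_atTop ((t M - A)/η + (∑ i ∈ range M, (1:ℝ)/i) + 1)
    obtain ⟨N, hN⟩ := (this.and (eventually_ge_atTop M)).exists
    exact ⟨N, hN.2, hN.1⟩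
  have h1 := tele N hN1
  have h2 := hbd N hN1
  have h3 : (t M - A)/η + 1 ≤ (∑ i ∈ range N, (1:ℝ)/i) - ∑ i ∈ range M, (1:ℝ)/i := by
    linarith
  have h4 : t M - A + η ≤ η * ((∑ i ∈ range N, (1:ℝ)/i) - ∑ i ∈ range M, (1:ℝ)/i) := by
    calc t M - A + η = ((t M - A)/η + 1) * η := by field_simp
    _ ≤ ((∑ i ∈ range N, (1:ℝ)/i) - ∑ i ∈ range M, (1:ℝ)/i) * η := by
        apply mul_le_mul_of_nonneg_right h3 (le_of_lt hη)
    _ = _ := by ring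
  linarith

lemma escape (t : ℕ → ℝ) (c δ η K A₁ A₂ : ℝ) (hδ : 0 < δ) (hη : 0 < η) (M : ℕ)
    (hbd : ∀ N, M ≤ N → A₁ ≤ t N ∧ t N ≤ A₂)
    (hD1 : ∀ N, M ≤ N → c + δ ≤ t N → t (N+1) ≤ t N - η/N)
    (hD2 : ∀ N, M ≤ N → t N ≤ c - δ → t N + η/N ≤ t (N+1))
    (hD3 : ∀ N, M ≤ N → |t (N+1) - t N| ≤ K/N)
    (hKδ : ∀ N, M ≤ N → K/N ≤ δ) :
    ∀ᶠ N in atTop, |t N - c| ≤ 2*δ := by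
  have hex : ∃ N₂, M ≤ N₂ ∧ |t N₂ - c| ≤ δ := by
    by_contra h
    push_neg at h
    rcases le_or_gt (t M) c with hc | hc
    · have hlow : ∀ N, M ≤ N → t N ≤ c - δ := by
        intro N hN
        induction N, hN using Nat.le_induction with
        | base =>
          have := h M le_rfl
          rcases abs_cases (t M - c) with ⟨h1,h2⟩|⟨h1,h2⟩ <;> linarith
        | succ n hn ih =>
          have h3 := abs_le.mp (hD3 n hn)
          have hK := hKδ n hn
          have := h (n+1) (by omega)
          rcases abs_cases (t (n+1) - c) with ⟨h1,h2⟩|⟨h1,h2⟩ <;> linarith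
      exact no_perma_high (fun N => -t N) η (-A₂) hη M
        (fun N hN => by simpa using (hbd N hN).2)
        (fun N hN => by
          have := hD2 N hN (hlow N hN)
          show -t (N+1) ≤ -t N - η/N
          linarith)
    · have hhigh : ∀ N, M ≤ N → c + δ ≤ t N := by
        intro N hN
        induction N, hN using Nat.le_induction with
        | base =>
          have := h M le_rfl
          rcases abs_cases (t M - c) with ⟨h1,h2⟩|⟨h1,h2⟩ <;> linarith
        | succ n hn ih =>
          have h3 := abs_le.mp (hD3 n hn)
          have hK := hKδ n hn
          have := h (n+1) (by omega)
          rcases abs_cases (t (n+1) - c) with ⟨h1,h2⟩|⟨h1,h2⟩ <;> linarith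
      exact no_perma_high t η A₁ hη M (fun N hN => (hbd N hN).1)
        (fun N hN => hD1 N hN (hhigh N hN))
  obtain ⟨N₂, hN₂M, hN₂⟩ := hex
  rw [Filter.eventually_atTop]
  refine ⟨N₂, ?_⟩
  intro N hN
  induction N, hN using Nat.le_induction with
  | base => rw [abs_le] at *; constructor <;> linarith [hN₂.1, hN₂.2]
  | succ n hn ih =>
    have hMn : M ≤ n := le_trans hN₂M hn
    have h3 := abs_le.mp (hD3 n hMn)
    have hK := hKδ n hMn
    have hi := abs_le.mp ih
    rw [abs_le]
    rcases le_or_gt (t n) (c + δ) with h1 | h1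
    · rcases le_or_gt (c - δ) (t n) with h2 | h2
      · constructor <;> linarith
      · have hstep := hD2 n hMn (by linarith)
        have hpos : (0:ℝ) ≤ η / n := by positivity
        constructor <;> linarith
    · have hstep := hD1 n hMn (by linarith)
      have hpos : (0:ℝ) ≤ η / n := by positivity
      constructor <;> linarith

-- persistence step for upper bound C₀ = 2b+12, scaled variables σ = ν·x, υ = ν·y
lemma step_ub (b ν σ υ : ℝ) (hb : 0 ≤ b) (hν : 2*b+12 ≤ ν) (hυ0 : 0 ≤ υ)
    (hυσ : υ ≤ σ) (hυb : υ ≤ b+1) (hσ : σ ≤ 2*b+12) :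
    (σ*ν - (σ-υ)^2/2) * (ν+1) ≤ (2*b+12)*ν^2 := by
  have c1 : σ*ν - (σ-υ)^2/2 ≤ (2*b+12)*ν - ((2*b+12)-υ)^2/2 := by
    nlinarith [mul_nonneg (show (0:ℝ) ≤ (2*b+12) - σ by linarith)
      (show (0:ℝ) ≤ ν - ((2*b+12)+σ-2*υ)/2 by nlinarith)]
  have hsq : (b+11)^2 ≤ ((2*b+12)-υ)^2 := by nlinarith
  have c2 : ((2*b+12)*ν - ((2*b+12)-υ)^2/2) * (ν+1) ≤ (2*b+12)*ν^2 := by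
    nlinarith [mul_le_mul_of_nonneg_right hsq (show (0:ℝ) ≤ ν+1 by linarith),
      mul_le_mul_of_nonneg_right (show 4*b+24 ≤ (b+11)^2 by nlinarith)
        (show (0:ℝ) ≤ ν+1 by linarith)]
  have hν1 : (0:ℝ) ≤ ν + 1 := by linarith
  calc (σ*ν - (σ-υ)^2/2) * (ν+1) ≤ ((2*b+12)*ν - ((2*b+12)-υ)^2/2) * (ν+1) :=
        mul_le_mul_of_nonneg_right c1 hν1
    _ ≤ (2*b+12)*ν^2 := c2

-- drift down when t ≥ c + δ
lemma drift1 (b w δ ε ν t u : ℝ) (hb : 0 ≤ b) (hw0 : 1 ≤ w) (hw : w^2 = 1+2*b)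
    (hδ : 0 < δ) (hε0 : 0 ≤ ε) (hε1 : ε ≤ 1) (hεδ : ε*(2*b+24) ≤ δ)
    (hν : 1 ≤ ν) (ht : t ≤ 2*b+12) (hu1 : b - ε ≤ u) (hu2 : u ≤ b + ε)
    (hreg : b+1+w + δ ≤ t) :
    (ν+1)*(t*ν - (t-u)^2/2) ≤ t*ν^2 - (δ/2)*ν := by
  have hs0 : 0 ≤ t - b - ε := by nlinarith
  have htu : t - b - ε ≤ t - u := by linarith
  have h1 : (t-b-ε)^2 ≤ (t-u)^2 := by nlinarith
  have idq : (t-(b+1-w))*(t-(b+1+w)) = (t-b)^2 - 2*t := by linear_combination -hw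
  have h2 : 2*δ ≤ (t-b)^2 - 2*t := by
    nlinarith [mul_le_mul (show (2:ℝ) ≤ t-(b+1-w) by nlinarith)
      (show δ ≤ t-(b+1+w) by linarith) (le_of_lt hδ) (show (0:ℝ) ≤ t-(b+1-w) by nlinarith)]
  have key : 2*t + δ ≤ (t-u)^2 := by nlinarith
  nlinarith [mul_le_mul_of_nonneg_right key (show (0:ℝ) ≤ ν+1 by linarith), hδ.le, hν]

-- drift up when c⁻ + m/2 ≤ t ≤ c - δ
lemma drift2 (b w δ ε m ν t u : ℝ) (hb : 0 ≤ b) (hw0 : 1 ≤ w) (hw : w^2 = 1+2*b)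
    (hδ : 0 < δ) (hm : 0 < m) (hε0 : 0 ≤ ε) (hε1 : ε ≤ 1)
    (hεE : ε*(4*b+24) ≤ m*δ/8)
    (hν : 1 ≤ ν) (hν2 : (2*b+12)^2 ≤ (m*δ/8)*ν)
    (ht : t ≤ 2*b+12) (hu1 : b - ε ≤ u) (hu2 : u ≤ b + ε) (hu0 : 0 ≤ u) (hut : u ≤ t)
    (hreg1 : (b+1-w) + m/2 ≤ t) (hreg2 : t ≤ b+1+w - δ) :
    t*ν^2 + (m*δ/8)*ν ≤ (ν+1)*(t*ν - (t-u)^2/2) := by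
  have ht0 : 0 ≤ t := le_trans hu0 hut
  -- (t-u)^2 ≤ (t-b)^2 + ε*(4b+24)
  have p2 : (t-u)^2 ≤ (t-b)^2 + ε*(4*b+24) := by
    have hq : (t-u)^2 - (t-b)^2 = (b-u)*(2*t-b-u) := by ring
    rcases le_or_gt 0 (2*t-b-u) with h|h
    · nlinarith [mul_le_mul_of_nonneg_right (show b - u ≤ ε by linarith) h]
    · nlinarith [mul_le_mul_of_nonneg_right (show u - b ≤ ε by linarith)
        (by linarith : (0:ℝ) ≤ -(2*t-b-u)),
        mul_le_mul_of_nonneg_left (show -(2*t-b-u) ≤ 2*b+1 by linarith) hε0]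
  -- 2t - (t-b)^2 = (t - c⁻)(c - t) ≥ (m/2)·δ
  have idq : (t-(b+1-w))*((b+1+w)-t) = 2*t - (t-b)^2 := by linear_combination hw
  have p1 : (m/2)*δ ≤ 2*t - (t-b)^2 := by
    rw [← idq]
    have := mul_le_mul (show m/2 ≤ t-(b+1-w) by linarith) (show δ ≤ (b+1+w)-t by linarith)
      hδ.le (by linarith)
    linarith
  -- bracket: 2t - (t-u)^2 ≥ 3mδ/8
  have br : 3*(m*δ)/8 ≤ 2*t - (t-u)^2 := by nlinarith
  -- (t-u)^2 ≤ (2b+12)^2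
  have p3 : (t-u)^2 ≤ (2*b+12)^2 := by nlinarith
  nlinarith [mul_le_mul_of_nonneg_right br (show (0:ℝ) ≤ ν by linarith)]

-- bounded step
lemma drift3 (b ν t u : ℝ) (hb : 0 ≤ b) (hν : 1 ≤ ν) (ht0 : 0 ≤ t) (ht : t ≤ 2*b+12)
    (hu0 : 0 ≤ u) (hut : u ≤ t) :
    |(ν+1)*(t*ν - (t-u)^2/2) - t*ν^2| ≤ ((2*b+12) + (2*b+12)^2)*ν := by
  have p3 : (t-u)^2 ≤ (2*b+12)^2 := by nlinarith
  rw [abs_le]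
  constructor
  · nlinarith [mul_le_mul_of_nonneg_right p3 (show (0:ℝ) ≤ ν+1 by linarith),
      mul_le_mul_of_nonneg_right p3 (show (0:ℝ) ≤ ν by linarith)]
  · nlinarith [sq_nonneg (t-u), mul_le_mul_of_nonneg_right ht (show (0:ℝ) ≤ ν by linarith)]

section
variable (x y : ℕ → ℝ) (k : ℕ)

lemma core_pos (h1 : ∀ N, k ≤ N → 0 ≤ y N) (h2 : ∀ N, k ≤ N → y N ≤ x N)
    (h3 : ∀ N, k ≤ N → x N ≤ y N + 1) (h4 : ∀ N, k ≤ N → x (N+1) = x N - (x N - y N)^2/2)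
    (h5 : 0 < x k) : ∀ N, k ≤ N → 0 < x N := by
  intro N hN
  induction N, hN using Nat.le_induction with
  | base => exact h5
  | succ n hn ih =>
    rw [h4 n hn]
    nlinarith [h1 n hn, h2 n hn, h3 n hn,
      mul_nonneg (show (0:ℝ) ≤ x n - y n by linarith [h2 n hn])
        (show (0:ℝ) ≤ 1 - (x n - y n) by linarith [h3 n hn, h1 n hn])]

lemma core_half (h1 : ∀ N, k ≤ N → 0 ≤ y N) (h2 : ∀ N, k ≤ N → y N ≤ x N)
    (h3 : ∀ N, k ≤ N → x N ≤ y N + 1) (h4 : ∀ N, k ≤ N → x (N+1) = x N - (x N - y N)^2/2) :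
    ∀ N, k ≤ N → x N / 2 ≤ x (N+1) := by
  intro N hN
  rw [h4 N hN]
  nlinarith [h1 N hN, h2 N hN, h3 N hN,
    mul_nonneg (show (0:ℝ) ≤ x N - y N by linarith [h2 N hN])
      (show (0:ℝ) ≤ 1 - (x N - y N) by linarith [h3 N hN, h1 N hN])]

lemma core_inv1 (h1 : ∀ N, k ≤ N → 0 ≤ y N) (h2 : ∀ N, k ≤ N → y N ≤ x N)
    (h3 : ∀ N, k ≤ N → x N ≤ y N + 1) (h4 : ∀ N, k ≤ N → x (N+1) = x N - (x N - y N)^2/2)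
    (h5 : 0 < x k) : ∀ N, k ≤ N → 1/(x (N+1)) ≤ 1/(x N) + 1 := by
  intro N hN
  have hp := core_pos x y k h1 h2 h3 h4 h5 N hN
  have hp' := core_pos x y k h1 h2 h3 h4 h5 (N+1) (by omega)
  have hhalf := core_half x y k h1 h2 h3 h4 N hN
  have key : x N - x (N+1) ≤ x N * x (N+1) := by
    rw [h4 N hN]
    nlinarith [h1 N hN, h2 N hN, h3 N hN, hhalf,
      mul_nonneg (show (0:ℝ) ≤ x N - y N by linarith [h2 N hN])
        (show (0:ℝ) ≤ 1 - (x N - y N) by linarith [h3 N hN, h1 N hN])]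
  have hid : 1/x (N+1) - 1/x N = (x N - x (N+1))/(x N * x (N+1)) := by
    rw [div_sub_div _ _ hp'.ne' hp.ne', one_mul, mul_one, mul_comm]
  have hle : (x N - x (N+1))/(x N * x (N+1)) ≤ 1 := by
    rw [div_le_one (mul_pos hp hp')]; exact key
  linarith

lemma core_invsum (h1 : ∀ N, k ≤ N → 0 ≤ y N) (h2 : ∀ N, k ≤ N → y N ≤ x N)
    (h3 : ∀ N, k ≤ N → x N ≤ y N + 1) (h4 : ∀ N, k ≤ N → x (N+1) = x N - (x N - y N)^2/2)
    (h5 : 0 < x k) : ∀ N, k ≤ N → 1/(x N) ≤ 1/(x k) + ((N:ℝ) - (k:ℝ)) := by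
  intro N hN
  induction N, hN using Nat.le_induction with
  | base => simp
  | succ n hn ih =>
    have := core_inv1 x y k h1 h2 h3 h4 h5 n hn
    push_cast
    linarith

end

lemma one_div_add_const (C : ℝ) : Tendsto (fun n : ℕ => 1 / ((n:ℝ) + C)) atTop (nhds 0) := by
  have h : Tendsto (fun n : ℕ => (n:ℝ) + C) atTop atTop :=
    tendsto_atTop_add_const_right _ C tendsto_natCast_atTop_atTop
  simpa [one_div, Function.comp_def] using tendsto_inv_atTop_zero.comp h

lemma nat_div_add_const (A : ℝ) :
    Tendsto (fun N : ℕ => (N:ℝ)/((N:ℝ)+A)) atTop (nhds 1) := by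
  have h1 : Tendsto (fun N : ℕ => 1 - A*(1/((N:ℝ)+A))) atTop (nhds (1 - A*0)) :=
    tendsto_const_nhds.sub ((one_div_add_const A).const_mul A)
  rw [mul_zero, sub_zero] at h1
  refine h1.congr' ?_
  filter_upwards [eventually_gt_atTop ⌈|A|⌉₊] with N hN
  have hA : |A| ≤ (⌈|A|⌉₊:ℝ) := Nat.le_ceil _
  have hN' : (⌈|A|⌉₊:ℝ) < (N:ℝ) := by exact_mod_cast hN
  have hpos : (0:ℝ) < (N:ℝ) + A := by
    have := neg_abs_le A
    linarith
  field_simp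
  ring



lemma core_ub (x y : ℕ → ℝ) (k : ℕ) (b : ℝ) (h1 : ∀ N, k ≤ N → 0 ≤ y N) (h2 : ∀ N, k ≤ N → y N ≤ x N)
    (h3 : ∀ N, k ≤ N → x N ≤ y N + 1) (h4 : ∀ N, k ≤ N → x (N+1) = x N - (x N - y N)^2/2)
    (h5 : 0 < x k) (hb : 0 ≤ b)
    (hy : Tendsto (fun N : ℕ => (N:ℝ) * y N) atTop (nhds b)) :
    ∃ M₁, k ≤ M₁ ∧ 1 ≤ M₁ ∧ ∀ N, M₁ ≤ N → (N:ℝ)*x N ≤ 2*b+12 := by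
  have pos := core_pos x y k h1 h2 h3 h4 h5
  obtain ⟨m1, hm1⟩ := eventually_atTop.mp (hy.eventually (eventually_le_nhds
    (show b < b+1 by linarith)))
  set M₀ := max (max m1 (k+1)) ⌈(2*b+12:ℝ)⌉₊ with hM₀def
  have hM₀k : k + 1 ≤ M₀ := le_trans (le_max_right m1 (k+1)) (le_max_left _ _)
  have hM₀m : m1 ≤ M₀ := le_trans (le_max_left m1 (k+1)) (le_max_left _ _)
  have hM₀c : (2*b+12:ℝ) ≤ (M₀:ℝ) := by
    refine le_trans (Nat.le_ceil _) ?_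
    exact_mod_cast Nat.cast_le.mpr (le_max_right (max m1 (k+1)) _)
  -- persistence
  have hper : ∀ M, M₀ ≤ M → (M:ℝ)*x M ≤ 2*b+12 → ∀ N, M ≤ N → (N:ℝ)*x N ≤ 2*b+12 := by
    intro M hM hxM N hN
    induction N, hN using Nat.le_induction with
    | base => exact hxM
    | succ n hn ih =>
      have hkn : k ≤ n := by omega
      have hν : (2*b+12:ℝ) ≤ (n:ℝ) := by
        refine le_trans hM₀c ?_
        exact_mod_cast Nat.cast_le.mpr (by omega : M₀ ≤ n)
      have hνpos : (0:ℝ) < (n:ℝ) := by linarith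
      have hsu := step_ub b (n:ℝ) ((n:ℝ)*x n) ((n:ℝ)*y n) hb hν
        (mul_nonneg hνpos.le (h1 n hkn))
        (mul_le_mul_of_nonneg_left (h2 n hkn) hνpos.le)
        (hm1 n (by omega)) ih
      have hc : ((n+1:ℕ):ℝ) = (n:ℝ)+1 := by push_cast; ring
      rw [hc, h4 n hkn]
      refine le_of_mul_le_mul_right ?_ (show (0:ℝ) < (n:ℝ)^2 by positivity)
      calc ((n:ℝ)+1)*(x n - (x n - y n)^2/2) * (n:ℝ)^2
          = ((n:ℝ)*x n*(n:ℝ) - ((n:ℝ)*x n - (n:ℝ)*y n)^2/2)*((n:ℝ)+1) := by ring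
        _ ≤ (2*b+12)*(n:ℝ)^2 := hsu
  -- reaching
  have hreach : ∃ M, M₀ ≤ M ∧ (M:ℝ)*x M ≤ 2*b+12 := by
    by_contra hcon
    push_neg at hcon
    have hstep8 : ∀ N, M₀ ≤ N → 1/(x N) + 1/8 ≤ 1/(x (N+1)) := by
      intro N hN
      have hkn : k ≤ N := by omega
      have hp := pos N hkn
      have hp' := pos (N+1) (by omega)
      have hνpos : (0:ℝ) < (N:ℝ) := by
        have : (2*b+12:ℝ) ≤ (N:ℝ) := by
          refine le_trans hM₀c ?_
          exact_mod_cast Nat.cast_le.mpr hN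
        linarith
      have hyb := hm1 N (by omega)
      have hxb := hcon N hN
      have hd : y N ≤ x N / 2 := by
        have h2' : (N:ℝ)*(2*(y N)) ≤ (N:ℝ)*(x N) := by nlinarith
        have := le_of_mul_le_mul_left h2' hνpos
        linarith
      have hx8 : x (N+1) ≤ x N - (x N)^2/8 := by
        rw [h4 N hkn]
        nlinarith [mul_nonneg (show (0:ℝ) ≤ x N - y N - x N/2 by linarith)
          (show (0:ℝ) ≤ x N - y N + x N/2 by nlinarith [h1 N hkn])]
      have hq : x (N+1) ≤ x N := by nlinarith [sq_nonneg (x N)]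
      have hid : 1/x (N+1) - 1/x N = (x N - x (N+1))/(x N * x (N+1)) := by
        rw [div_sub_div _ _ hp'.ne' hp.ne', one_mul, mul_one, mul_comm]
      have hdiv : 1/8 ≤ (x N - x (N+1))/(x N * x (N+1)) := by
        rw [le_div_iff₀ (mul_pos hp hp')]
        nlinarith [mul_le_mul_of_nonneg_left hq hp.le]
      linarith
    have hsum : ∀ N, M₀ ≤ N → 1/(x M₀) + (1/8)*((N:ℝ) - (M₀:ℝ)) ≤ 1/(x N) := by
      intro N hN
      induction N, hN using Nat.le_induction with
      | base => simp
      | succ n hn ih =>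
        have := hstep8 n hn
        push_cast
        linarith
    have h8 := hsum (9*M₀+9) (by omega)
    have hkN : k ≤ 9*M₀+9 := by omega
    have hpN := pos (9*M₀+9) hkN
    have hpM := pos M₀ (by omega)
    have hbig := hcon (9*M₀+9) (by omega)
    push_cast at h8 hbig
    have h9 : (8*(M₀:ℝ)+9)/8 ≤ 1/(x (9*M₀+9)) := by
      have := one_div_pos.mpr hpM
      linarith
    have h10 : x (9*M₀+9) * (8*(M₀:ℝ)+9) ≤ 8 := by
      have hmm := mul_le_mul_of_nonneg_left h9 hpN.le
      have hxx : x (9*M₀+9) * (1/x (9*M₀+9)) = 1 := by field_simp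
      nlinarith
    have hM0 : (0:ℝ) ≤ (M₀:ℝ) := Nat.cast_nonneg _
    nlinarith [mul_lt_mul_of_pos_right hbig (show (0:ℝ) < 8*(M₀:ℝ)+9 by linarith),
      mul_le_mul_of_nonneg_left h10 (show (0:ℝ) ≤ 9*(M₀:ℝ)+9 by linarith)]
  obtain ⟨M, hMM₀, hxM⟩ := hreach
  exact ⟨M, by omega, by omega, hper M hMM₀ hxM⟩


lemma core_lb (x y : ℕ → ℝ) (k : ℕ) (h1 : ∀ N, k ≤ N → 0 ≤ y N)
    (h2 : ∀ N, k ≤ N → y N ≤ x N) (h3 : ∀ N, k ≤ N → x N ≤ y N + 1)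
    (h4 : ∀ N, k ≤ N → x (N+1) = x N - (x N - y N)^2/2) (h5 : 0 < x k) :
    ∀ ε : ℝ, 0 < ε → ∀ᶠ N : ℕ in atTop, 1 - ε ≤ (N:ℝ)*x N := by
  intro ε hε
  set A := 1/(x k) - (k:ℝ) with hAdef
  have hlim := nat_div_add_const A
  filter_upwards [hlim.eventually (eventually_gt_nhds (show 1 - ε < 1 by linarith)),
    eventually_ge_atTop k, eventually_gt_atTop ⌈|A|⌉₊] with N hl hk hA
  have hxpos := core_pos x y k h1 h2 h3 h4 h5 N hk
  have hsum := core_invsum x y k h1 h2 h3 h4 h5 N hk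
  have hpos : (0:ℝ) < (N:ℝ) + A := by
    have h1 : |A| ≤ (⌈|A|⌉₊:ℝ) := Nat.le_ceil _
    have h2 : (⌈|A|⌉₊:ℝ) < (N:ℝ) := by exact_mod_cast hA
    have := neg_abs_le A
    linarith
  have hsum' : 1/(x N) ≤ (N:ℝ) + A := by rw [hAdef]; linarith
  have h7 : 1 ≤ x N * ((N:ℝ)+A) := by
    have hmm := mul_le_mul_of_nonneg_left hsum' hxpos.le
    rw [mul_one_div, div_self hxpos.ne'] at hmm
    linarith
  have h8 : (N:ℝ)/((N:ℝ)+A) ≤ (N:ℝ) * x N := by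
    rw [div_le_iff₀ hpos]
    have := mul_le_mul_of_nonneg_left h7 (Nat.cast_nonneg N : (0:ℝ) ≤ N)
    nlinarith
  linarith

set_option maxHeartbeats 1000000 in
lemma core (x y : ℕ → ℝ) (k : ℕ) (b : ℝ) (hb : 0 ≤ b)
    (h1 : ∀ N, k ≤ N → 0 ≤ y N) (h2 : ∀ N, k ≤ N → y N ≤ x N)
    (h3 : ∀ N, k ≤ N → x N ≤ y N + 1)
    (h4 : ∀ N, k ≤ N → x (N+1) = x N - (x N - y N)^2/2)
    (h5 : 0 < x k)
    (hy : Tendsto (fun N : ℕ => (N:ℝ) * y N) atTop (nhds b)) :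
    Tendsto (fun N : ℕ => (N:ℝ) * x N) atTop (nhds (b + 1 + Real.sqrt (1+2*b))) := by
  have pos := core_pos x y k h1 h2 h3 h4 h5
  set w := Real.sqrt (1+2*b) with hwdef
  have hw2 : w^2 = 1+2*b := Real.sq_sqrt (by linarith)
  have hw0 : (0:ℝ) ≤ w := Real.sqrt_nonneg _
  have hw1 : 1 ≤ w := by nlinarith
  obtain ⟨M₁, hM₁k, hM₁1, hub⟩ := core_ub x y k b h1 h2 h3 h4 h5 hb hy
  have hcmL : b+1-w < max 1 b := by
    rcases eq_or_lt_of_le hb with hb0|hb0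
    · have hww : w = 1 := by nlinarith
      rw [hww, ← hb0]
      norm_num
    · have hww : 1 < w := by nlinarith
      exact lt_of_lt_of_le (by linarith) (le_max_right 1 b)
  set m := max 1 b - (b+1-w) with hmdef
  have hm : 0 < m := by simp only [hmdef, sub_pos]; exact hcmL
  rw [Metric.tendsto_atTop]
  intro ε' hε'
  set δ := ε'/4 with hδdef
  have hδ : 0 < δ := by positivity
  set ε := min 1 (min (δ/(2*b+24)) (min ((m*δ/8)/(4*b+24)) (m/2))) with hεdef
  have hε : 0 < ε := by
    refine lt_min (by norm_num) (lt_min (by positivity) (lt_min (by positivity) (by positivity)))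
  have hε1 : ε ≤ 1 := min_le_left _ _
  have hεδ : ε*(2*b+24) ≤ δ := by
    have h : ε ≤ δ/(2*b+24) := le_trans (min_le_right _ _) (min_le_left _ _)
    rw [le_div_iff₀ (show (0:ℝ) < 2*b+24 by linarith)] at h
    exact h
  have hεE : ε*(4*b+24) ≤ m*δ/8 := by
    have h : ε ≤ (m*δ/8)/(4*b+24) :=
      le_trans (min_le_right _ _) (le_trans (min_le_right _ _) (min_le_left _ _))
    rw [le_div_iff₀ (show (0:ℝ) < 4*b+24 by linarith)] at h
    exact h
  have hεm : ε ≤ m/2 := le_trans (min_le_right _ _)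
    (le_trans (min_le_right _ _) (min_le_right _ _))
  set η := min (δ/2) (m*δ/8) with hηdef
  have hη : 0 < η := lt_min (by positivity) (by positivity)
  set K := (2*b+12) + (2*b+12)^2 with hKdef
  obtain ⟨m2, hm2⟩ := Metric.tendsto_atTop.mp hy ε hε
  obtain ⟨m3, hm3⟩ := eventually_atTop.mp (core_lb x y k h1 h2 h3 h4 h5 (m/2) (by positivity))
  have ht1 : Tendsto (fun N : ℕ => (m*δ/8)*(N:ℝ)) atTop atTop :=
    Tendsto.const_mul_atTop (by positivity) tendsto_natCast_atTop_atTop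
  have ht2 : Tendsto (fun N : ℕ => δ*(N:ℝ)) atTop atTop :=
    Tendsto.const_mul_atTop hδ tendsto_natCast_atTop_atTop
  obtain ⟨m4, hm4⟩ := eventually_atTop.mp
    ((ht1.eventually_ge_atTop ((2*b+12)^2)).and (ht2.eventually_ge_atTop K))
  set M₂ := max (max M₁ (max m2 m3)) (max m4 (k+1)) with hM₂def
  -- facts available for N ≥ M₂
  have hM₂k : k + 1 ≤ M₂ := le_trans (le_max_right m4 (k+1)) (le_max_right _ _)
  have facts : ∀ N, M₂ ≤ N → k ≤ N ∧ 1 ≤ (N:ℝ) ∧ (N:ℝ)*x N ≤ 2*b+12 ∧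
      b - ε ≤ (N:ℝ)*y N ∧ (N:ℝ)*y N ≤ b + ε ∧ 0 ≤ (N:ℝ)*y N ∧
      (N:ℝ)*y N ≤ (N:ℝ)*x N ∧ 0 ≤ (N:ℝ)*x N ∧
      (2*b+12)^2 ≤ (m*δ/8)*(N:ℝ) ∧ K ≤ δ*(N:ℝ) ∧ 1 - m/2 ≤ (N:ℝ)*x N := by
    intro N hN
    have hkN : k ≤ N := by omega
    have hν1 : 1 ≤ (N:ℝ) := by
      have : 1 ≤ N := by omega
      exact_mod_cast this
    have hνpos : (0:ℝ) ≤ (N:ℝ) := by linarith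
    have hdist := hm2 N (le_trans (le_trans (le_max_left m2 m3) (le_max_right M₁ _))
      (le_trans (le_max_left _ (max m4 (k+1))) hN) : m2 ≤ N)
    rw [Real.dist_eq, abs_lt] at hdist
    have h44 := hm4 N (le_trans (le_trans (le_max_left m4 (k+1)) (le_max_right _ _)) hN)
    refine ⟨hkN, hν1, hub N (le_trans (le_trans (le_max_left M₁ _) (le_max_left _ _)) hN),
      by linarith [hdist.1], by linarith [hdist.2],
      mul_nonneg hνpos (h1 N hkN), mul_le_mul_of_nonneg_left (h2 N hkN) hνpos,
      mul_nonneg hνpos (pos N hkN).le, h44.1, h44.2,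
      hm3 N (le_trans (le_trans (le_max_right m2 m3) (le_max_right M₁ _))
        (le_trans (le_max_left _ (max m4 (k+1))) hN))⟩
  have hEQ : ∀ N, M₂ ≤ N → ((N+1:ℕ):ℝ) * x (N+1) * (N:ℝ)^2 =
      ((N:ℝ)+1)*(((N:ℝ)*x N)*(N:ℝ) - ((N:ℝ)*x N - (N:ℝ)*y N)^2/2) := by
    intro N hN
    have hkN : k ≤ N := by omega
    have hc : ((N+1:ℕ):ℝ) = (N:ℝ)+1 := by push_cast; ring
    rw [hc, h4 N hkN]
    ring
  have hν2pos : ∀ N : ℕ, M₂ ≤ N → (0:ℝ) < (N:ℝ)^2 := by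
    intro N hN
    have : (1:ℕ) ≤ N := by omega
    have : (1:ℝ) ≤ (N:ℝ) := by exact_mod_cast this
    positivity
  have key := escape (fun N : ℕ => (N:ℝ)*x N) (b+1+w) δ η K 0 (2*b+12) hδ hη M₂
    (fun N hN => by
      obtain ⟨hkN, hν1, htub, hu1, hu2, hu0, hut, ht0, hνm, hνK, hlb1⟩ := facts N hN
      exact ⟨ht0, htub⟩)
    (fun N hN hreg => by
      obtain ⟨hkN, hν1, htub, hu1, hu2, hu0, hut, ht0, hνm, hνK, hlb1⟩ := facts N hN
      have hd1 := drift1 b w δ ε (N:ℝ) ((N:ℝ)*x N) ((N:ℝ)*y N) hb hw1 hw2 hδ hε.le hε1 hεδ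
        hν1 htub hu1 hu2 hreg
      have hνne : (N:ℝ) ≠ 0 := by linarith
      have hfin : ((N+1:ℕ):ℝ) * x (N+1) * (N:ℝ)^2 ≤ ((N:ℝ)*x N - η/(N:ℝ)) * (N:ℝ)^2 := by
        have hexp : ((N:ℝ)*x N - η/(N:ℝ)) * (N:ℝ)^2 = ((N:ℝ)*x N)*(N:ℝ)^2 - η*(N:ℝ) := by
          field_simp
        rw [hexp, hEQ N hN]
        have hημ : η*(N:ℝ) ≤ (δ/2)*(N:ℝ) :=
          mul_le_mul_of_nonneg_right (min_le_left _ _) (by linarith)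
        linarith [hd1]
      exact le_of_mul_le_mul_right hfin (hν2pos N hN))
    (fun N hN hreg => by
      obtain ⟨hkN, hν1, htub, hu1, hu2, hu0, hut, ht0, hνm, hνK, hlb1⟩ := facts N hN
      have hreg1 : (b+1-w) + m/2 ≤ (N:ℝ)*x N := by
        rcases max_cases 1 b with ⟨hc1,hc2⟩|⟨hc1,hc2⟩
        · rw [hc1] at hmdef
          linarith
        · rw [hc1] at hmdef
          linarith
      have hd2 := drift2 b w δ ε m (N:ℝ) ((N:ℝ)*x N) ((N:ℝ)*y N) hb hw1 hw2 hδ hm hε.le hε1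
        hεE hν1 hνm htub hu1 hu2 hu0 hut hreg1 (show (N:ℝ)*x N ≤ b+1+w - δ from hreg)
      have hνne : (N:ℝ) ≠ 0 := by linarith
      have hfin : ((N:ℝ)*x N + η/(N:ℝ)) * (N:ℝ)^2 ≤ ((N+1:ℕ):ℝ) * x (N+1) * (N:ℝ)^2 := by
        have hexp : ((N:ℝ)*x N + η/(N:ℝ)) * (N:ℝ)^2 = ((N:ℝ)*x N)*(N:ℝ)^2 + η*(N:ℝ) := by
          field_simp
        rw [hexp, hEQ N hN]
        have hημ : η*(N:ℝ) ≤ (m*δ/8)*(N:ℝ) :=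
          mul_le_mul_of_nonneg_right (min_le_right _ _) (by linarith)
        linarith [hd2]
      exact le_of_mul_le_mul_right hfin (hν2pos N hN))
    (fun N hN => by
      obtain ⟨hkN, hν1, htub, hu1, hu2, hu0, hut, ht0, hνm, hνK, hlb1⟩ := facts N hN
      have hd3 := drift3 b (N:ℝ) ((N:ℝ)*x N) ((N:ℝ)*y N) hb hν1 ht0 htub hu0 hut
      have hνne : (N:ℝ) ≠ 0 := by intro h; rw [h] at hν1; linarith
      have hfin : |((N+1:ℕ):ℝ) * x (N+1) - (N:ℝ)*x N| * (N:ℝ)^2 ≤ (K/(N:ℝ)) * (N:ℝ)^2 := by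
        have e1 : |((N+1:ℕ):ℝ) * x (N+1) - (N:ℝ)*x N| * (N:ℝ)^2
            = |(((N+1:ℕ):ℝ) * x (N+1) - (N:ℝ)*x N) * (N:ℝ)^2| := by
          rw [abs_mul, abs_of_nonneg (sq_nonneg ((N:ℝ)))]
        have e2 : (((N+1:ℕ):ℝ) * x (N+1) - (N:ℝ)*x N) * (N:ℝ)^2
            = (((N:ℝ)+1)*(((N:ℝ)*x N)*(N:ℝ) - ((N:ℝ)*x N - (N:ℝ)*y N)^2/2))
              - ((N:ℝ)*x N)*(N:ℝ)^2 := by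
          rw [sub_mul, hEQ N hN]
        have e3 : (K/(N:ℝ)) * (N:ℝ)^2 = K * (N:ℝ) := by
          field_simp
        rw [e1, e2, e3]
        exact hd3
      exact le_of_mul_le_mul_right hfin (hν2pos N hN))
    (fun N hN => by
      obtain ⟨hkN, hν1, htub, hu1, hu2, hu0, hut, ht0, hνm, hνK, hlb1⟩ := facts N hN
      rw [div_le_iff₀ (by linarith : (0:ℝ) < (N:ℝ))]
      linarith)
  obtain ⟨N₀, hN₀⟩ := eventually_atTop.mp key
  rw [hwdef] at hN₀
  refine ⟨N₀, fun n hn => ?_⟩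
  rw [Real.dist_eq]
  have := hN₀ n hn
  rw [hδdef] at this
  calc |(n:ℝ) * x n - (b + 1 + Real.sqrt (1+2*b))| ≤ 2*(ε'/4) := this
    _ < ε' := by linarith

section
variable (ρ : ℕ → ℕ → ℝ)
    (h0 : ∀ N : ℕ, ρ 0 N = 0)
    (hdiag : ∀ k : ℕ, 1 ≤ k → ρ k k = (k : ℝ) / 2)
    (hrec : ∀ k N : ℕ, 1 ≤ k → k < N →
      ρ k N = ρ k (N - 1) - (ρ k (N - 1) - ρ (k - 1) (N - 1)) ^ 2 / 2)

include h0 hdiag hrec in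
lemma rho_diff : ∀ k, 1 ≤ k → ∀ N, k ≤ N →
    0 ≤ ρ k N - ρ (k-1) N ∧ ρ k N - ρ (k-1) N ≤ 1 := by
  intro k hk
  induction k, hk using Nat.le_induction with
  | base =>
    intro N hN
    simp only [Nat.sub_self]
    induction N, hN using Nat.le_induction with
    | base =>
      rw [hdiag 1 le_rfl, h0]
      norm_num
    | succ n hn ih =>
      have hr := hrec 1 (n+1) le_rfl (by omega)
      simp only [Nat.add_sub_cancel, Nat.sub_self] at hr
      rw [h0] at hr ih ⊢
      rw [hr]
      constructor <;> nlinarith [ih.1, ih.2]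
  | succ k hk ihk =>
    intro N hN
    simp only [Nat.add_sub_cancel]
    induction N, hN using Nat.le_induction with
    | base =>
      have hr := hrec k (k+1) hk (by omega)
      simp only [Nat.add_sub_cancel] at hr
      have he := ihk k le_rfl
      rw [hdiag k hk] at he
      rw [hdiag (k+1) (by omega), hr, hdiag k hk]
      push_cast
      constructor <;> nlinarith [he.1, he.2]
    | succ n hn ihn =>
      have hr1 := hrec (k+1) (n+1) (by omega) (by omega)
      have hr2 := hrec k (n+1) hk (by omega)
      simp only [Nat.add_sub_cancel] at hr1 hr2
      have he := ihk n (by omega)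
      rw [hr1, hr2]
      constructor <;>
        nlinarith [he.1, he.2, ihn.1, ihn.2, sq_nonneg (1 - (ρ (k+1) n - ρ k n)),
          sq_nonneg (ρ (k+1) n - ρ k n), sq_nonneg (ρ k n - ρ (k-1) n)]

include h0 hdiag hrec in
lemma rho_nonneg : ∀ j N, j ≤ N → 0 ≤ ρ j N := by
  intro j
  induction j with
  | zero => intro N _; rw [h0]
  | succ i ihi =>
    intro N hN
    have hd := (rho_diff ρ h0 hdiag hrec (i+1) (by omega) N hN).1
    simp only [Nat.add_sub_cancel] at hd
    linarith [ihi N (by omega)]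

end

lemma c_ge (c : ℕ → ℝ) (hc1 : c 1 = 2)
    (hcrec : ∀ k : ℕ, 2 ≤ k → c k = c (k - 1) + 1 + Real.sqrt (1 + 2 * c (k - 1))) :
    ∀ j, 1 ≤ j → 2 ≤ c j := by
  intro j hj
  induction j, hj using Nat.le_induction with
  | base => rw [hc1]
  | succ j hj ih =>
    rw [hcrec (j+1) (by omega)]
    simp only [Nat.add_sub_cancel]
    linarith [Real.sqrt_nonneg (1 + 2 * c j)]

/-- For the dynamic-programming values `ρ k N` of the `k`-purchase problem,
with `ρ 0 N = 0`, `ρ k k = k/2` and `ρ k N = ρ k (N-1) - (ρ k (N-1) - ρ (k-1) (N-1))²/2`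
for `N > k ≥ 1`, we have `N · ρ k N → c k` as `N → ∞`, for every fixed `k ≥ 1`. -/
theorem stmt_4 (ρ : ℕ → ℕ → ℝ)
    (h0 : ∀ N : ℕ, ρ 0 N = 0)
    (hdiag : ∀ k : ℕ, 1 ≤ k → ρ k k = (k : ℝ) / 2)
    (hrec : ∀ k N : ℕ, 1 ≤ k → k < N →
      ρ k N = ρ k (N - 1) - (ρ k (N - 1) - ρ (k - 1) (N - 1)) ^ 2 / 2)
    (c : ℕ → ℝ) (hc1 : c 1 = 2)
    (hcrec : ∀ k : ℕ, 2 ≤ k → c k = c (k - 1) + 1 + Real.sqrt (1 + 2 * c (k - 1)))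
    (k : ℕ) (hk : 1 ≤ k) :
    Filter.Tendsto (fun N : ℕ => (N : ℝ) * ρ k N) Filter.atTop (nhds (c k)) := by
  induction k, hk using Nat.le_induction with
  | base =>
    have hd := rho_diff ρ h0 hdiag hrec 1 le_rfl
    simp only [Nat.sub_self] at hd
    have hco := core (ρ 1) (ρ 0) 1 0 le_rfl
      (fun N _ => by rw [h0])
      (fun N hN => by linarith [(hd N hN).1])
      (fun N hN => by linarith [(hd N hN).2])
      (fun N hN => by
        have := hrec 1 (N+1) le_rfl (by omega)
        simpa using this)
      (by rw [hdiag 1 le_rfl]; norm_num)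
      (by
        have : (fun N : ℕ => (N:ℝ) * ρ 0 N) = fun _ => (0:ℝ) := by
          funext N
          rw [h0, mul_zero]
        rw [this]
        exact tendsto_const_nhds)
    rw [hc1]
    have heq : (0:ℝ) + 1 + Real.sqrt (1+2*0) = 2 := by
      rw [show (1+2*(0:ℝ)) = 1 by norm_num, Real.sqrt_one]
      norm_num
    rw [heq] at hco
    exact hco
  | succ k hk ih =>
    have hge := c_ge c hc1 hcrec k hk
    have hd := rho_diff ρ h0 hdiag hrec (k+1) (by omega)
    simp only [Nat.add_sub_cancel] at hd
    have hco := core (ρ (k+1)) (ρ k) (k+1) (c k) (by linarith)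
      (fun N hN => rho_nonneg ρ h0 hdiag hrec k N (by omega))
      (fun N hN => by linarith [(hd N hN).1])
      (fun N hN => by linarith [(hd N hN).2])
      (fun N hN => by
        have := hrec (k+1) (N+1) (by omega) (by omega)
        simpa using this)
      (by
        rw [hdiag (k+1) (by omega)]
        have : (0:ℝ) < ((k+1:ℕ):ℝ) := by exact_mod_cast Nat.succ_pos k
        linarith)
      ih
    rw [hcrec (k+1) (by omega)]
    simp only [Nat.add_sub_cancel]
    exact hco
end

section
/- Define reals ρ_{k,N} for integers 0 ≤ k ≤ N by: ρ_{0,N} = 0, ρ_{k,k} = k/2 for k ≥ 1, and ρ_{k,N} = ρ_{k,N-1} − (ρ_{k,N-1} − ρ_{k-1,N-1})^2/2 for N > k ≥ 1. Let (c_k) be defined by c_1 = 2 and c_k = c_{k-1} + 1 + sqrt(1 + 2 c_{k-1}) for k ≥ 2. Then ρ_{k,N} ≤ c_k / N for all integers N ≥ k ≥ 1. -/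
private lemma cfacts (c : ℕ → ℝ) (hc1 : c 1 = 2)
    (hcrec : ∀ k : ℕ, 2 ≤ k → c k = c (k - 1) + 1 + Real.sqrt (1 + 2 * c (k - 1))) :
    ∀ k : ℕ, 1 ≤ k → ∃ b : ℝ, b ^ 2 = 2 * c k ∧ (k : ℝ) + 1 ≤ b ∧
      b ≤ (k : ℝ) + 1 + Real.sqrt ((k : ℝ) + 1) ∧
      c k - b = (if k = 1 then 0 else c (k - 1)) := by
  intro k hk
  induction k, hk using Nat.le_induction with
  | base =>
    refine ⟨2, by rw [hc1]; norm_num, by norm_num, ?_, by simp [hc1]⟩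
    have := Real.sqrt_nonneg ((1:ℝ) + 1)
    push_cast; linarith
  | succ k hk ih =>
    obtain ⟨b, hb2, hbl, hbu, hprev⟩ := ih
    have hkR : (1:ℝ) ≤ (k:ℝ) := by exact_mod_cast hk
    have hb0 : (0:ℝ) < b := by linarith
    have hck0 : (0:ℝ) ≤ c k := by nlinarith
    have hrec' : c (k+1) = c k + 1 + Real.sqrt (1 + 2 * c k) := by
      have := hcrec (k+1) (by omega)
      simpa using this
    set s := Real.sqrt (1 + 2 * c k) with hs
    have hs0 : 0 ≤ s := Real.sqrt_nonneg _
    have hs2 : s ^ 2 = 1 + 2 * c k := Real.sq_sqrt (by linarith)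
    have hsb : b ≤ s := by nlinarith
    set t1 := Real.sqrt ((k:ℝ) + 1) with ht1
    set t2 := Real.sqrt ((k:ℝ) + 2) with ht2
    have ht10 : 0 ≤ t1 := Real.sqrt_nonneg _
    have ht20 : 0 ≤ t2 := Real.sqrt_nonneg _
    have ht1sq : t1 ^ 2 = (k:ℝ) + 1 := Real.sq_sqrt (by linarith)
    have ht2sq : t2 ^ 2 = (k:ℝ) + 2 := Real.sq_sqrt (by linarith)
    have ht12 : t1 ≤ t2 := Real.sqrt_le_sqrt (by linarith)
    have hsup : s ≤ (k:ℝ) + 1 + t2 := by nlinarith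
    refine ⟨1 + s, by push_cast; nlinarith, by push_cast; nlinarith, ?_, ?_⟩
    · push_cast
      rw [show ((k:ℝ) + 1 + 1) = (k:ℝ) + 2 by ring]
      linarith
    have : (k + 1 : ℕ) ≠ 1 := by omega
    simp only [this, if_false]
    simp only [Nat.add_sub_cancel]
    linarith [hrec']

set_option maxHeartbeats 1000000 in
private lemma key_ineq (x y ck b n k : ℝ)
    (hk : 1 ≤ k) (hn : k ≤ n)
    (hb2 : b ^ 2 = 2 * ck) (hbl : k + 1 ≤ b)
    (hbu : b ≤ k + 1 + Real.sqrt (k + 1))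
    (hx : x ≤ ck / n) (hy : y ≤ (ck - b) / n) :
    x - (x - y) ^ 2 / 2 ≤ ck / (n + 1) := by
  have hn0 : (0:ℝ) < n := by linarith
  have hn1 : (0:ℝ) < n + 1 := by linarith
  have hb0 : (0:ℝ) < b := by linarith
  have hck0 : (0:ℝ) ≤ ck := by nlinarith
  have hxn : x * n ≤ ck := by
    calc x * n ≤ (ck / n) * n := by nlinarith
    _ = ck := by field_simp
  have hyn : y * n ≤ ck - b := by
    calc y * n ≤ ((ck - b) / n) * n := by nlinarith
    _ = ck - b := by field_simp
  rw [le_div_iff₀ hn1]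
  rcases le_or_gt b n with hbn | hbn
  · rcases le_or_gt (x * n) (ck - b) with hxB | hxB
    · -- F ≤ x and x * (n+1) ≤ ck
      have h1 : (ck - b) * (n + 1) ≤ ck * n := by nlinarith
      have h2 : x * (n + 1) ≤ ck := by nlinarith
      nlinarith [sq_nonneg (x - y), mul_pos hn0 hn1]
    · -- ck - b < x*n ≤ ck, y*n ≤ ck - b
      have hxy : x - y > 0 := by nlinarith
      have h1 : (x - y) ^ 2 ≥ (x - (ck - b)/n) ^ 2 := by
        have : x - (ck - b)/n ≤ x - y := by nlinarith [hy]
        have h2 : 0 < x - (ck - b)/n := by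
          have : (ck - b)/n < x := by
            rw [div_lt_iff₀ hn0]; nlinarith
          linarith
        nlinarith
      have hA : x ≤ ck / n := hx
      -- goal: (x - (x-y)^2/2)*(n+1) ≤ ck
      have hkey : (x - (x - (ck - b)/n) ^ 2 / 2) * (n + 1) ≤ ck := by
        have e1 : (x - (ck-b)/n) * n = x * n - (ck - b) := by field_simp
        have hpoly : (x*n*n - (x*n - (ck-b))^2/2)*(n+1) ≤ ck*n^2 := by
          nlinarith [mul_nonneg (mul_nonneg hn1.le (sub_nonneg.2 hxn)) (sub_nonneg.2 hbn),
            mul_nonneg hn1.le (sq_nonneg (ck - x*n)), hck0]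
        rw [← e1] at hpoly
        have e2 : (x*n*n - ((x - (ck-b)/n)*n)^2/2)*(n+1)
            = (x - (x - (ck - b)/n) ^ 2 / 2) * (n + 1) * n^2 := by ring
        rw [e2] at hpoly
        have hn2 : (0:ℝ) < n^2 := by positivity
        exact le_of_mul_le_mul_right hpoly hn2
      have hm := mul_nonneg hn1.le (sub_nonneg.2 h1)
      nlinarith [hkey, hm]
  · -- b > n : F ≤ y + 1/2 and (ck-b)/n + 1/2 ≤ ck/(n+1)
    have hF : x - (x - y) ^ 2 / 2 ≤ y + 1/2 := by nlinarith [sq_nonneg (x - y - 1)]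
    set s := Real.sqrt (n + 1) with hsdef
    have hs0 : 0 ≤ s := Real.sqrt_nonneg _
    have hssq : s ^ 2 = n + 1 := Real.sq_sqrt (by linarith)
    have hs1 : 1 ≤ s := by nlinarith
    have hbub : b ≤ n + 1 + s := by
      have h1 : Real.sqrt (k + 1) ≤ s := Real.sqrt_le_sqrt (by linarith)
      linarith
    have key2 : (ck - b) * (n + 1) + n * (n + 1) / 2 ≤ ck * n := by
      nlinarith [mul_nonneg (sub_nonneg.2 hbub) (by linarith : (0:ℝ) ≤ b - n),
        mul_nonneg (sub_nonneg.2 hbub) (sub_nonneg.2 hs1)]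
    nlinarith [mul_pos hn0 hn1]

/-- For the dynamic-programming values `ρ k N` of the `k`-purchase problem,
`ρ k N ≤ c k / N` for all `N ≥ k ≥ 1`. -/
theorem stmt_5 (ρ : ℕ → ℕ → ℝ)
    (h0 : ∀ N : ℕ, ρ 0 N = 0)
    (hdiag : ∀ k : ℕ, 1 ≤ k → ρ k k = (k : ℝ) / 2)
    (hrec : ∀ k N : ℕ, 1 ≤ k → k < N →
      ρ k N = ρ k (N - 1) - (ρ k (N - 1) - ρ (k - 1) (N - 1)) ^ 2 / 2)
    (c : ℕ → ℝ) (hc1 : c 1 = 2)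
    (hcrec : ∀ k : ℕ, 2 ≤ k → c k = c (k - 1) + 1 + Real.sqrt (1 + 2 * c (k - 1))) :
    ∀ k N : ℕ, 1 ≤ k → k ≤ N → ρ k N ≤ c k / N := by
  intro k N
  induction N using Nat.strong_induction_on generalizing k with
  | _ N ih =>
    intro hk hkN
    rcases hkN.eq_or_lt with rfl | hlt
    · -- diagonal
      obtain ⟨b, hb2, hbl, hbu, -⟩ := cfacts c hc1 hcrec k hk
      have hk0 : (0:ℝ) < (k:ℝ) := by exact_mod_cast hk
      rw [hdiag k hk, div_le_div_iff₀ (by norm_num) hk0]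
      nlinarith
    · -- step
      obtain ⟨n, rfl⟩ : ∃ n, N = n + 1 := ⟨N - 1, by omega⟩
      have hkn : k ≤ n := by omega
      have hx : ρ k n ≤ c k / n := ih n (by omega) k hk hkn
      obtain ⟨b, hb2, hbl, hbu, hprev⟩ := cfacts c hc1 hcrec k hk
      have hy : ρ (k - 1) n ≤ (c k - b) / n := by
        by_cases hk1 : k = 1
        · subst hk1
          simp only [if_pos rfl] at hprev
          rw [hprev]
          simp [h0]
        · rw [if_neg hk1] at hprev
          rw [hprev]
          exact ih n (by omega) (k - 1) (by omega) (by omega)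
      have hrec' : ρ k (n + 1) = ρ k n - (ρ k n - ρ (k - 1) n) ^ 2 / 2 := by
        simpa using hrec k (n + 1) hk hlt
      rw [hrec']
      have hkey := key_ineq (ρ k n) (ρ (k - 1) n) (c k) b (n : ℝ) (k : ℝ)
        (by exact_mod_cast hk) (by exact_mod_cast hkn) hb2 hbl hbu hx hy
      calc ρ k n - (ρ k n - ρ (k - 1) n) ^ 2 / 2 ≤ c k / ((n : ℝ) + 1) := hkey
      _ = c k / ((n + 1 : ℕ) : ℝ) := by push_cast; ring
end

section
/- Define reals ρ_{k,N} for integers 0 ≤ k ≤ N by: ρ_{0,N} = 0, ρ_{k,k} = k/2 for k ≥ 1, and ρ_{k,N} = ρ_{k,N-1} − (ρ_{k,N-1} − ρ_{k-1,N-1})^2/2 for N > k ≥ 1. Let (c_k) be defined by c_1 = 2 and c_k = c_{k-1} + 1 + sqrt(1 + 2 c_{k-1}) for k ≥ 2. Then ρ_{k,N} ≥ (1 − N^{−1/2}) · c_k / N for all integers N ≥ k ≥ 1. -/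
lemma le_of_sq_le_sq'' (a b : ℝ) (hb : 0 ≤ b) (h : a^2 ≤ b^2) : a ≤ b := by
  have h2 := Real.sqrt_le_sqrt h
  rw [Real.sqrt_sq_eq_abs, Real.sqrt_sq hb] at h2
  exact (le_abs_self a).trans h2

lemma sqrt_le_num (x q : ℝ) (hq : 0 ≤ q) (h : x ≤ q^2) : Real.sqrt x ≤ q :=
  (Real.sqrt_le_sqrt h).trans (by rw [Real.sqrt_sq hq])

lemma num_le_sqrt (w x : ℝ) (hw : 0 ≤ w) (hx : 0 ≤ x) (h : w^2 ≤ x) : w ≤ Real.sqrt x :=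
  (Real.le_sqrt hw hx).mpr h

lemma key_core (s t : ℝ) (hs : 0 < s) (htn : 0 ≤ t) (h2 : t^2 = s^2 + 1) (h7 : 7 ≤ s^2) :
    (t-1)*s^6 ≤ (s-1)*(s^3-s+1)*t^3 := by
  have hs2 : (5/2:ℝ) ≤ s := by nlinarith
  have ht : 0 < t := by nlinarith [sq_nonneg t]
  have hU : 2*s*t ≤ 2*s^2+1 := le_of_sq_le_sq'' _ _ (by positivity) (by nlinarith)
  have hC : (0:ℝ) < s^5 - s^3 + 2*s^2 - 2*s + 1 := by
    nlinarith [mul_nonneg (sub_nonneg.2 h7) (pow_pos hs 3).le, pow_pos hs 3, sq_nonneg (s-1)]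
  have hq : 0 ≤ s^5 - 4*s^4 + 5*s^3 - 4*s^2 + 2*s - 1 := by
    nlinarith [mul_nonneg (sub_nonneg.2 h7) (sub_nonneg.2 hs2), sq_nonneg (s-3),
      mul_nonneg (mul_nonneg (sub_nonneg.2 h7) (sub_nonneg.2 hs2)) (sub_nonneg.2 hs2),
      mul_nonneg (sub_nonneg.2 h7) (sq_nonneg (s-3)), mul_nonneg (sub_nonneg.2 hs2) (sq_nonneg (s-3))]
  have h3 : 2*s*(t*(s^5 - s^3 + 2*s^2 - 2*s + 1)) ≤ 2*s^7 := by
    have := mul_le_mul_of_nonneg_right hU hC.le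
    nlinarith [this]
  have h4 : t*(s^5 - s^3 + 2*s^2 - 2*s + 1) ≤ s^6 := by nlinarith [h3]
  have ht3 : t^3 = t*(s^2+1) := by rw [pow_succ, h2]; ring
  nlinarith [h4, ht3]

lemma mono_core (s t : ℝ) (hs : 0 < s) (htn : 0 ≤ t) (h2 : t^2 = s^2 + 1) (h7 : 2 ≤ s^2) :
    (t-1)*s^3 ≤ (s-1)*t^3 := by
  have ht : 0 < t := by nlinarith [sq_nonneg t]
  have hq : 2*s^5-4*s^4+4*s^3-4*s^2+2*s-1 ≥ 0 := by
    have hs1 : (7/5:ℝ) ≤ s := by nlinarith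
    nlinarith [mul_nonneg (sub_nonneg.2 h7) (sub_nonneg.2 hs1), sq_nonneg (s-1),
      mul_nonneg (sub_nonneg.2 h7) (sq_nonneg (s-1)),
      mul_nonneg (mul_nonneg (sub_nonneg.2 h7) (sub_nonneg.2 hs1)) (sub_nonneg.2 hs1),
      mul_nonneg (sub_nonneg.2 hs1) (sq_nonneg (s-1)),
      mul_nonneg (mul_nonneg (sub_nonneg.2 hs1) (sub_nonneg.2 hs1)) (sq_nonneg (s-1))]
  have h4 : t*(s^2-s+1) ≤ s^3 := le_of_sq_le_sq'' _ _ (by positivity) (by nlinarith [sq_nonneg (s-1)])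
  have ht3 : t^3 = t*(s^2+1) := by rw [pow_succ, h2]; ring
  nlinarith [h4, ht3]

lemma step_alg (x y cK cK1 u v : ℝ) (hcK : 0 < cK) (hu0 : 0 ≤ u)
    (hsq : (cK - cK1)^2 = 2*cK) (hmono : cK1 ≤ cK)
    (huv : v ≤ u - u^2) (hMONO : v ≤ u)
    (hyx0 : 0 ≤ x - y) (hyx1 : x - y ≤ 1) (hax : cK*u ≤ x) (hby : cK1*u ≤ y) :
    cK*v ≤ x - (x-y)^2/2 := by
  have hba : cK1*u ≤ cK*u := mul_le_mul_of_nonneg_right hmono hu0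
  have hsq2 : (cK*u - cK1*u)^2 = 2*cK*u^2 := by
    rw [show cK*u - cK1*u = (cK - cK1)*u by ring, mul_pow, hsq]; try ring
  have key3 : cK*v ≤ cK*u - (cK*u - cK1*u)^2/2 := by
    have h := mul_le_mul_of_nonneg_left huv hcK.le
    rw [hsq2]; nlinarith [h]
  have key4 : cK*v ≤ cK*u := mul_le_mul_of_nonneg_left hMONO hcK.le
  rcases le_or_gt y (cK*u) with h | h
  · nlinarith [mul_nonneg (sub_nonneg.2 hax) (show 0 ≤ 2 - (x-y) - (cK*u-y) by nlinarith),
      mul_nonneg (sub_nonneg.2 hby) (show 0 ≤ (cK*u-y) + (cK*u-cK1*u) by nlinarith)]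
  · nlinarith [mul_nonneg hyx0 (show 0 ≤ 2 - (x-y) by linarith)]

lemma step_real (x y cK cK1 s t m n : ℝ)
    (hm : m = s^2) (hn : n = t^2) (hmn : n = m + 1) (hs : 0 < s) (htn : 0 ≤ t) (h7 : 7 ≤ s^2)
    (hcK : 0 < cK) (hcK1 : 0 ≤ cK1) (hmono : cK1 ≤ cK) (hsq : (cK - cK1)^2 = 2*cK)
    (hyx0 : 0 ≤ x - y) (hyx1 : x - y ≤ 1)
    (hax : (1 - 1/s)*cK/m ≤ x) (hby : (1 - 1/s)*cK1/m ≤ y) :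
    (1 - 1/t)*cK/n ≤ x - (x-y)^2/2 := by
  have hs1 : (1:ℝ) ≤ s := by nlinarith
  have ht2 : t^2 = s^2 + 1 := by rw [← hn, hmn, hm]
  have ht : 0 < t := by nlinarith [sq_nonneg t]
  have hs0 : s ≠ 0 := by positivity
  have ht0 : t ≠ 0 := by positivity
  have hu0 : 0 ≤ (s-1)/s^3 := div_nonneg (by linarith) (by positivity)
  have ha : (1 - 1/s)*cK/m = cK*((s-1)/s^3) := by rw [hm]; field_simp
  have hb : (1 - 1/s)*cK1/m = cK1*((s-1)/s^3) := by rw [hm]; field_simp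
  have hg : (1 - 1/t)*cK/n = cK*((t-1)/t^3) := by rw [hn]; field_simp
  rw [ha] at hax; rw [hb] at hby; rw [hg]
  have huv : (t-1)/t^3 ≤ (s-1)/s^3 - ((s-1)/s^3)^2 := by
    have h1 : (s-1)/s^3 - ((s-1)/s^3)^2 = (s-1)*(s^3-s+1)/s^6 := by field_simp; ring
    rw [h1, div_le_div_iff₀ (by positivity) (by positivity)]
    nlinarith [key_core s t hs ht.le ht2 h7]
  have hMONO : (t-1)/t^3 ≤ (s-1)/s^3 := by
    rw [div_le_div_iff₀ (by positivity) (by positivity)]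
    nlinarith [mono_core s t hs ht.le ht2 (by linarith)]
  exact step_alg x y cK cK1 _ _ hcK hu0 hsq hmono huv hMONO hyx0 hyx1 hax hby

lemma fbound (sN W ck r n ρv : ℝ) (hn : 0 < n) (h1 : 1 ≤ sN) (hW : sN ≤ W)
    (hck : 0 ≤ ck) (hr : ck ≤ r) (hfin : (1 - 1/W)*r/n ≤ ρv) : (1 - 1/sN)*ck/n ≤ ρv := by
  have hW0 : 0 < W := lt_of_lt_of_le (by linarith) hW
  have h2 : 1/W ≤ 1/sN := one_div_le_one_div_of_le (by linarith) hW
  have h3 : (0:ℝ) ≤ 1 - 1/sN := by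
    have h5 : 1/sN ≤ 1 := by rw [div_le_one (by linarith)]; exact h1
    linarith
  have h4 : (1 - 1/sN) * ck ≤ (1 - 1/W) * r := mul_le_mul (by linarith) hr hck (by linarith)
  exact le_trans (div_le_div_of_nonneg_right h4 hn.le) hfin

set_option maxHeartbeats 2000000 in
/-- For the dynamic-programming values `ρ k N` of the `k`-purchase problem,
`ρ k N ≥ (1 - N^{-1/2}) · c k / N` for all `N ≥ k ≥ 1`. -/
theorem stmt_6 (ρ : ℕ → ℕ → ℝ)
    (h0 : ∀ N : ℕ, ρ 0 N = 0)
    (hdiag : ∀ k : ℕ, 1 ≤ k → ρ k k = (k : ℝ) / 2)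
    (hrec : ∀ k N : ℕ, 1 ≤ k → k < N →
      ρ k N = ρ k (N - 1) - (ρ k (N - 1) - ρ (k - 1) (N - 1)) ^ 2 / 2)
    (c : ℕ → ℝ) (hc1 : c 1 = 2)
    (hcrec : ∀ k : ℕ, 2 ≤ k → c k = c (k - 1) + 1 + Real.sqrt (1 + 2 * c (k - 1))) :
    ∀ k N : ℕ, 1 ≤ k → k ≤ N → (1 - 1 / Real.sqrt N) * c k / N ≤ ρ k N := by
  have hc2 : ∀ k : ℕ, 1 ≤ k → 2 ≤ c k := by
    intro k hk
    induction k with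
    | zero => omega
    | succ n ih =>
      by_cases hn : n = 0
      · subst hn; rw [hc1]
      · have hn1 : 1 ≤ n := by omega
        have h := hcrec (n+1) (by omega)
        simp only [Nat.add_sub_cancel] at h
        have hs := Real.sqrt_nonneg (1 + 2 * c n)
        have := ih hn1
        linarith
  have hcmono : ∀ k : ℕ, 2 ≤ k → c (k-1) + 1 ≤ c k := by
    intro k hk
    have h := hcrec k hk
    have hs := Real.sqrt_nonneg (1 + 2 * c (k-1))
    linarith
  have hcsq : ∀ k : ℕ, 2 ≤ k → (c k - c (k-1))^2 = 2 * c k := by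
    intro k hk
    have h := hcrec k hk
    have harg : (0:ℝ) ≤ 1 + 2*c (k-1) := by linarith [hc2 (k-1) (by omega)]
    have hs2 : Real.sqrt (1 + 2 * c (k-1))^2 = 1 + 2*c (k-1) := Real.sq_sqrt harg
    rw [h]
    linear_combination hs2

  have b1 : c 1 ≤ (2:ℝ) := le_of_eq hc1
  have b2 : c 2 ≤ (1309017/250000:ℝ) := by
    have h := hcrec 2 (by norm_num)
    norm_num at h
    rw [h]
    have hs := sqrt_le_num (1 + 2*c 1) (559017/250000:ℝ) (by norm_num) (by nlinarith [b1])
    linarith [b1, hs]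
  have b3 : c 3 ≤ (9623123/1000000:ℝ) := by
    have h := hcrec 3 (by norm_num)
    norm_num at h
    rw [h]
    have hs := sqrt_le_num (1 + 2*c 2) (677411/200000:ℝ) (by norm_num) (by nlinarith [b2])
    linarith [b2, hs]
  have b4 : c 4 ≤ (7561353/500000:ℝ) := by
    have h := hcrec 4 (by norm_num)
    norm_num at h
    rw [h]
    have hs := sqrt_le_num (1 + 2*c 3) (4499583/1000000:ℝ) (by norm_num) (by nlinarith [b3])
    linarith [b3, hs]
  have b5 : c 5 ≤ (10856233/500000:ℝ) := by
    have h := hcrec 5 (by norm_num)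
    norm_num at h
    rw [h]
    have hs := sqrt_le_num (1 + 2*c 4) (17468/3125:ℝ) (by norm_num) (by nlinarith [b4])
    linarith [b4, hs]
  have b6 : c 6 ≤ (2937767/100000:ℝ) := by
    have h := hcrec 6 (by norm_num)
    norm_num at h
    rw [h]
    have hs := sqrt_le_num (1 + 2*c 5) (1666301/250000:ℝ) (by norm_num) (by nlinarith [b5])
    linarith [b5, hs]
  have b7 : c 7 ≤ (9526957/250000:ℝ) := by
    have h := hcrec 7 (by norm_num)
    norm_num at h
    rw [h]
    have hs := sqrt_le_num (1 + 2*c 6) (3865079/500000:ℝ) (by norm_num) (by nlinarith [b6])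
    linarith [b6, hs]
  have b8 : c 8 ≤ (1496721/31250:ℝ) := by
    have h := hcrec 8 (by norm_num)
    norm_num at h
    rw [h]
    have hs := sqrt_le_num (1 + 2*c 7) (2196811/250000:ℝ) (by norm_num) (by nlinarith [b7])
    linarith [b7, hs]
  have b9 : c 9 ≤ (58733271/1000000:ℝ) := by
    have h := hcrec 9 (by norm_num)
    norm_num at h
    rw [h]
    have hs := sqrt_le_num (1 + 2*c 8) (9838199/1000000:ℝ) (by norm_num) (by nlinarith [b8])
    linarith [b8, hs]
  have b10 : c 10 ≤ (14123501/200000:ℝ) := by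
    have h := hcrec 10 (by norm_num)
    norm_num at h
    rw [h]
    have hs := sqrt_le_num (1 + 2*c 9) (5442117/500000:ℝ) (by norm_num) (by nlinarith [b9])
    linarith [b9, hs]
  have b11 : c 11 ≤ (41771869/500000:ℝ) := by
    have h := hcrec 11 (by norm_num)
    norm_num at h
    rw [h]
    have hs := sqrt_le_num (1 + 2*c 10) (11926233/1000000:ℝ) (by norm_num) (by nlinarith [b10])
    linarith [b10, hs]
  have b12 : c 12 ≤ (48754297/500000:ℝ) := by
    have h := hcrec 12 (by norm_num)
    norm_num at h
    rw [h]
    have hs := sqrt_le_num (1 + 2*c 11) (1620607/125000:ℝ) (by norm_num) (by nlinarith [b11])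
    linarith [b11, hs]
  have b13 : c 13 ≤ (14063651/125000:ℝ) := by
    have h := hcrec 13 (by norm_num)
    norm_num at h
    rw [h]
    have hs := sqrt_le_num (1 + 2*c 12) (7000307/500000:ℝ) (by norm_num) (by nlinarith [b12])
    linarith [b12, hs]
  have b14 : c 14 ≤ (128543117/1000000:ℝ) := by
    have h := hcrec 14 (by norm_num)
    norm_num at h
    rw [h]
    have hs := sqrt_le_num (1 + 2*c 13) (15033909/1000000:ℝ) (by norm_num) (by nlinarith [b13])
    linarith [b13, hs]
  have b15 : c 15 ≤ (7280409/50000:ℝ) := by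
    have h := hcrec 15 (by norm_num)
    norm_num at h
    rw [h]
    have hs := sqrt_le_num (1 + 2*c 14) (16065063/1000000:ℝ) (by norm_num) (by nlinarith [b14])
    linarith [b14, hs]
  have b16 : c 16 ≤ (81851259/500000:ℝ) := by
    have h := hcrec 16 (by norm_num)
    norm_num at h
    rw [h]
    have hs := sqrt_le_num (1 + 2*c 15) (8547169/500000:ℝ) (by norm_num) (by nlinarith [b15])
    linarith [b15, hs]
  have hcU : ∀ k : ℕ, 1 ≤ k → c k ≤ (k:ℝ)^2/2 + (k:ℝ)*Real.sqrt k/2 + (k:ℝ)/2 + Real.sqrt k/2 + 1/2 := by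
    intro k
    induction k using Nat.strong_induction_on with
    | _ k IHk =>
      intro hk
      by_cases hk16 : k ≤ 16
      · rcases (show k = 1 ∨ k = 2 ∨ k = 3 ∨ k = 4 ∨ k = 5 ∨ k = 6 ∨ k = 7 ∨ k = 8 ∨ k = 9 ∨ k = 10 ∨ k = 11 ∨ k = 12 ∨ k = 13 ∨ k = 14 ∨ k = 15 ∨ k = 16 by omega) with rfl|rfl|rfl|rfl|rfl|rfl|rfl|rfl|rfl|rfl|rfl|rfl|rfl|rfl|rfl|rfl
        · have hwk : (1:ℝ) ≤ Real.sqrt (1:ℝ) := num_le_sqrt _ _ (by norm_num) (by norm_num) (by norm_num)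
          push_cast
          linarith [b1, hwk]
        · have hwk : (1414213/1000000:ℝ) ≤ Real.sqrt (2:ℝ) := num_le_sqrt _ _ (by norm_num) (by norm_num) (by norm_num)
          push_cast
          linarith [b2, hwk]
        · have hwk : (34641/20000:ℝ) ≤ Real.sqrt (3:ℝ) := num_le_sqrt _ _ (by norm_num) (by norm_num) (by norm_num)
          push_cast
          linarith [b3, hwk]
        · have hwk : (2:ℝ) ≤ Real.sqrt (4:ℝ) := num_le_sqrt _ _ (by norm_num) (by norm_num) (by norm_num)
          push_cast
          linarith [b4, hwk]
        · have hwk : (2236067/1000000:ℝ) ≤ Real.sqrt (5:ℝ) := num_le_sqrt _ _ (by norm_num) (by norm_num) (by norm_num)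
          push_cast
          linarith [b5, hwk]
        · have hwk : (2449489/1000000:ℝ) ≤ Real.sqrt (6:ℝ) := num_le_sqrt _ _ (by norm_num) (by norm_num) (by norm_num)
          push_cast
          linarith [b6, hwk]
        · have hwk : (2645751/1000000:ℝ) ≤ Real.sqrt (7:ℝ) := num_le_sqrt _ _ (by norm_num) (by norm_num) (by norm_num)
          push_cast
          linarith [b7, hwk]
        · have hwk : (2828427/1000000:ℝ) ≤ Real.sqrt (8:ℝ) := num_le_sqrt _ _ (by norm_num) (by norm_num) (by norm_num)
          push_cast
          linarith [b8, hwk]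
        · have hwk : (3:ℝ) ≤ Real.sqrt (9:ℝ) := num_le_sqrt _ _ (by norm_num) (by norm_num) (by norm_num)
          push_cast
          linarith [b9, hwk]
        · have hwk : (3162277/1000000:ℝ) ≤ Real.sqrt (10:ℝ) := num_le_sqrt _ _ (by norm_num) (by norm_num) (by norm_num)
          push_cast
          linarith [b10, hwk]
        · have hwk : (207289/62500:ℝ) ≤ Real.sqrt (11:ℝ) := num_le_sqrt _ _ (by norm_num) (by norm_num) (by norm_num)
          push_cast
          linarith [b11, hwk]
        · have hwk : (3464101/1000000:ℝ) ≤ Real.sqrt (12:ℝ) := num_le_sqrt _ _ (by norm_num) (by norm_num) (by norm_num)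
          push_cast
          linarith [b12, hwk]
        · have hwk : (3605551/1000000:ℝ) ≤ Real.sqrt (13:ℝ) := num_le_sqrt _ _ (by norm_num) (by norm_num) (by norm_num)
          push_cast
          linarith [b13, hwk]
        · have hwk : (3741657/1000000:ℝ) ≤ Real.sqrt (14:ℝ) := num_le_sqrt _ _ (by norm_num) (by norm_num) (by norm_num)
          push_cast
          linarith [b14, hwk]
        · have hwk : (3872983/1000000:ℝ) ≤ Real.sqrt (15:ℝ) := num_le_sqrt _ _ (by norm_num) (by norm_num) (by norm_num)
          push_cast
          linarith [b15, hwk]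
        · have hwk : (4:ℝ) ≤ Real.sqrt (16:ℝ) := num_le_sqrt _ _ (by norm_num) (by norm_num) (by norm_num)
          push_cast
          linarith [b16, hwk]
      · have hk17 : 17 ≤ k := by omega
        have h := hcrec k (by omega)
        have hcast : ((k-1:ℕ):ℝ) = (k:ℝ) - 1 := by
          rw [Nat.cast_sub (by omega)]; norm_num
        have hk17' : (17:ℝ) ≤ (k:ℝ) := by exact_mod_cast hk17
        have hm0 : (0:ℝ) < ((k-1:ℕ):ℝ) := by rw [hcast]; linarith
        set s := Real.sqrt ((k-1:ℕ):ℝ) with hsdef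
        set t := Real.sqrt (k:ℝ) with htdef
        have hs2 : s^2 = ((k-1:ℕ):ℝ) := Real.sq_sqrt hm0.le
        have ht2 : t^2 = (k:ℝ) := Real.sq_sqrt (by positivity)
        have hs0 : 0 < s := Real.sqrt_pos.2 hm0
        have ht0 : 0 < t := Real.sqrt_pos.2 (by positivity)
        have hs4 : (4:ℝ) ≤ s := by
          apply num_le_sqrt _ _ (by norm_num) hm0.le
          rw [hcast]; nlinarith
        have ht2' : t^2 = s^2 + 1 := by rw [hs2, ht2, hcast]; ring
        have IH := IHk (k-1) (by omega) (by omega)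
        have hUk1 : ((k-1:ℕ):ℝ)^2/2 + ((k-1:ℕ):ℝ)*s/2 + ((k-1:ℕ):ℝ)/2 + s/2 + 1/2
            = (s^4+s^3+s^2+s+1)/2 := by rw [← hs2]; ring
        rw [hUk1] at IH
        have hsqrt : Real.sqrt (1 + 2*c (k-1)) ≤ s^2 + s/2 + 1/2 := by
          apply sqrt_le_num _ _ (by positivity)
          nlinarith [IH, hs4]
        have h3 : s^3 + 2*s + 1 ≤ t*(s^2+2) := by
          apply le_of_sq_le_sq'' _ _ (by positivity)
          nlinarith [ht2', sq_nonneg (s^2-s), sq_nonneg (s-1), sq_nonneg (s-2)]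
        have ekk : (k:ℝ) = s^2 + 1 := by rw [← ht2, ht2']
        rw [h, ekk]
        nlinarith [IH, hsqrt, h3]
  have hdiagb : ∀ k : ℕ, 1 ≤ k → (1 - 1/Real.sqrt k) * c k / (k:ℝ) ≤ (k:ℝ)/2 := by
    intro k hk
    have hk0 : (0:ℝ) < (k:ℝ) := by exact_mod_cast hk
    set s := Real.sqrt (k:ℝ) with hsdef
    have hs2 : s^2 = (k:ℝ) := Real.sq_sqrt hk0.le
    have hs1 : (1:ℝ) ≤ s := num_le_sqrt 1 k (by norm_num) hk0.le (by norm_num; exact_mod_cast hk)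
    have hs0 : (0:ℝ) < s := by linarith
    have hU : c k ≤ (s^4+s^3+s^2+s+1)/2 := by
      have h9 := hcU k hk
      rw [show (k:ℝ)^2/2 + (k:ℝ)*s/2 + (k:ℝ)/2 + s/2 + 1/2 = (s^4+s^3+s^2+s+1)/2 by
        rw [← hs2]; ring] at h9
      exact h9
    have h30 : (0:ℝ) ≤ 1 - 1/s := by
      have h5 : 1/s ≤ 1 := by rw [div_le_one hs0]; exact hs1
      linarith
    have step1 : (1 - 1/s) * c k / (k:ℝ) ≤ (1 - 1/s) * ((s^4+s^3+s^2+s+1)/2) / (k:ℝ) :=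
      div_le_div_of_nonneg_right (mul_le_mul_of_nonneg_left hU h30) hk0.le
    refine step1.trans ?_
    rw [← hs2]
    have e : (1 - 1/s) * ((s^4+s^3+s^2+s+1)/2) / (s^2) = (s^5-1)/(2*s^3) := by
      field_simp; ring
    rw [e, div_le_div_iff₀ (by positivity) (by norm_num)]
    nlinarith [hs1]
  have diff : ∀ N : ℕ, ∀ k : ℕ, 1 ≤ k → k ≤ N →
      0 ≤ ρ k N - ρ (k-1) N ∧ ρ k N - ρ (k-1) N ≤ 1 := by
    intro N
    induction N using Nat.strong_induction_on with
    | _ N IH =>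
      intro k hk hkN
      rcases eq_or_lt_of_le hkN with rfl | hlt
      · rcases eq_or_lt_of_le hk with hk1 | hk2
        · have ha : ρ 1 1 = 1/2 := by rw [hdiag 1 le_rfl]; norm_num
          have hb : ρ (1-1) 1 = 0 := by norm_num [h0]
          rw [← hk1, ha, hb]; norm_num
        · have h1 := hdiag k hk
          have h2 := hdiag (k-1) (by omega)
          have h3 := hrec (k-1) k (by omega) (by omega)
          have h4 := IH (k-1) (by omega) (k-1) (by omega) le_rfl
          have hcast : ((k-1:ℕ):ℝ) = (k:ℝ)-1 := by rw [Nat.cast_sub (by omega)]; norm_num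
          constructor
          · nlinarith [h4.1, h4.2, sq_nonneg (ρ (k-1) (k-1) - ρ (k-1-1) (k-1))]
          · nlinarith [h4.1, h4.2,
              mul_nonneg h4.1 (show (0:ℝ) ≤ 1 - (ρ (k-1) (k-1) - ρ (k-1-1) (k-1)) by linarith [h4.2])]
      · have hNk : k ≤ N-1 := by omega
        have hr1 := hrec k N hk hlt
        have h4 := IH (N-1) (by omega) k hk hNk
        rcases eq_or_lt_of_le hk with hk1 | hk2
        · rw [← hk1] at hr1 ⊢
          have hb : ρ (1-1) N = 0 := by norm_num [h0]
          have hb2 : ρ (1-1) (N-1) = 0 := by norm_num [h0]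
          rw [← hk1] at h4
          rw [hb2] at h4 hr1
          rw [hb, hr1]
          constructor
          · nlinarith [h4.1, h4.2, mul_nonneg (show (0:ℝ) ≤ ρ 1 (N-1) - 0 from h4.1)
              (show (0:ℝ) ≤ 2 - (ρ 1 (N-1) - 0) by linarith [h4.2])]
          · nlinarith [h4.1, h4.2, sq_nonneg (ρ 1 (N-1) - 0 - 1)]
        · have hr2 := hrec (k-1) N (by omega) (by omega)
          have h5 := IH (N-1) (by omega) (k-1) (by omega) (by omega)
          rw [hr1, hr2]
          constructor
          · nlinarith [h4.1, h4.2, sq_nonneg (ρ (k-1) (N-1) - ρ (k-1-1) (N-1)),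
              mul_nonneg h4.1 (show (0:ℝ) ≤ 2 - (ρ k (N-1) - ρ (k-1) (N-1)) by linarith [h4.2])]
          · nlinarith [h4.1, h4.2, h5.1, h5.2, sq_nonneg (ρ k (N-1) - ρ (k-1) (N-1) - 1),
              mul_nonneg h5.1 (show (0:ℝ) ≤ 1 - (ρ (k-1) (N-1) - ρ (k-1-1) (N-1)) by linarith [h5.2])]
  have main : ∀ N : ℕ, ∀ k : ℕ, 1 ≤ k → k ≤ N → (1 - 1 / Real.sqrt N) * c k / N ≤ ρ k N := by
    intro N
    induction N using Nat.strong_induction_on with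
    | _ N IH =>
      intro k hk hkN
      rcases eq_or_lt_of_le hkN with rfl | hlt
      · rw [hdiag k hk]; exact hdiagb k hk
      · by_cases hN7 : N ≤ 7
        · -- small cases, numeric
          have d11 : ρ 1 1 = 1/2 := by rw [hdiag 1 (by norm_num)]; norm_num
          have d22 : ρ 2 2 = 1 := by rw [hdiag 2 (by norm_num)]; norm_num
          have d33 : ρ 3 3 = 3/2 := by rw [hdiag 3 (by norm_num)]; norm_num
          have d44 : ρ 4 4 = 2 := by rw [hdiag 4 (by norm_num)]; norm_num
          have d55 : ρ 5 5 = 5/2 := by rw [hdiag 5 (by norm_num)]; norm_num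
          have d66 : ρ 6 6 = 3 := by rw [hdiag 6 (by norm_num)]; norm_num
          have d12 : ρ 1 2 = 3/8 := by
            have h := hrec 1 2 (by norm_num) (by norm_num)
            norm_num [d11, h0] at h
            linarith [h]
          have d13 : ρ 1 3 = 39/128 := by
            have h := hrec 1 3 (by norm_num) (by norm_num)
            norm_num [d12, h0] at h
            linarith [h]
          have d23 : ρ 2 3 = 103/128 := by
            have h := hrec 2 3 (by norm_num) (by norm_num)
            norm_num [d22, d12, h0] at h
            linarith [h]
          have d14 : ρ 1 4 = 8463/32768 := by
            have h := hrec 1 4 (by norm_num) (by norm_num)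
            norm_num [d13, h0] at h
            linarith [h]
          have d24 : ρ 2 4 = 87/128 := by
            have h := hrec 2 4 (by norm_num) (by norm_num)
            norm_num [d23, d13, h0] at h
            linarith [h]
          have d34 : ρ 3 4 = 41231/32768 := by
            have h := hrec 3 4 (by norm_num) (by norm_num)
            norm_num [d33, d23, h0] at h
            linarith [h]
          have d15 : ρ 1 5 = 483008799/2147483648 := by
            have h := hrec 1 5 (by norm_num) (by norm_num)
            norm_num [d14, h0] at h
            linarith [h]
          have d25 : ρ 2 5 = 1268929311/2147483648 := by
            have h := hrec 2 5 (by norm_num) (by norm_num)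
            norm_num [d24, d14, h0] at h
            linarith [h]
          have d35 : ρ 3 5 = 2342671135/2147483648 := by
            have h := hrec 3 5 (by norm_num) (by norm_num)
            norm_num [d34, d24, h0] at h
            linarith [h]
          have d45 : ρ 4 5 = 3704234271/2147483648 := by
            have h := hrec 4 5 (by norm_num) (by norm_num)
            norm_num [d44, d34, h0] at h
            linarith [h]
          have d16 : ρ 1 6 = 1841209495473815103/9223372036854775808 := by
            have h := hrec 1 6 (by norm_num) (by norm_num)
            norm_num [d15, h0] at h
            linarith [h]
          have d26 : ρ 2 6 = 18433909761423/35184372088832 := by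
            have h := hrec 2 6 (by norm_num) (by norm_num)
            norm_num [d25, d15, h0] at h
            linarith [h]
          have d36 : ρ 3 6 = 2074235679/2147483648 := by
            have h := hrec 3 6 (by norm_num) (by norm_num)
            norm_num [d35, d25, h0] at h
            linarith [h]
          have d46 : ρ 4 6 = 53618281850255/35184372088832 := by
            have h := hrec 4 6 (by norm_num) (by norm_num)
            norm_num [d45, d35, h0] at h
            linarith [h]
          have d56 : ρ 5 6 = 20287953569183366719/9223372036854775808 := by
            have h := hrec 5 6 (by norm_num) (by norm_num)
            norm_num [d55, d45, h0] at h
            linarith [h]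
          have d17 : ρ 1 7 = 30574267942866411492610617989187955839/170141183460469231731687303715884105728 := by
            have h := hrec 1 7 (by norm_num) (by norm_num)
            norm_num [d16, h0] at h
            linarith [h]
          have d27 : ρ 2 7 = 80194063109454028042184322738221149311/170141183460469231731687303715884105728 := by
            have h := hrec 2 7 (by norm_num) (by norm_num)
            norm_num [d26, d16, h0] at h
            linarith [h]
          have d37 : ρ 3 7 = 2149616987343718369583880735/2475880078570760549798248448 := by
            have h := hrec 3 7 (by norm_num) (by norm_num)
            norm_num [d36, d26, h0] at h
            linarith [h]
          have d47 : ρ 4 7 = 3387557026629098644483004959/2475880078570760549798248448 := by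
            have h := hrec 4 7 (by norm_num) (by norm_num)
            norm_num [d46, d36, h0] at h
            linarith [h]
          have d57 : ρ 5 7 = 335405838300157875639715278312047307903/170141183460469231731687303715884105728 := by
            have h := hrec 5 7 (by norm_num) (by norm_num)
            norm_num [d56, d46, h0] at h
            linarith [h]
          have d67 : ρ 6 7 = 455927226594039490821828877278898220159/170141183460469231731687303715884105728 := by
            have h := hrec 6 7 (by norm_num) (by norm_num)
            norm_num [d66, d56, h0] at h
            linarith [h]
          rcases (show N = 2 ∨ N = 3 ∨ N = 4 ∨ N = 5 ∨ N = 6 ∨ N = 7 by omega) with rfl|rfl|rfl|rfl|rfl|rfl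
          · rcases (show k = 1 by omega) with rfl
            · exact fbound _ (707107/500000) _ (2) _ _ (by norm_num)
                (num_le_sqrt 1 _ (by norm_num) (by norm_num) (by norm_num))
                (sqrt_le_num _ _ (by norm_num) (by norm_num))
                (by linarith [hc2 1 (by norm_num)]) b1 (by rw [d12]; norm_num)
          · rcases (show k = 1 ∨ k = 2 by omega) with rfl|rfl
            · exact fbound _ (1732051/1000000) _ (2) _ _ (by norm_num)
                (num_le_sqrt 1 _ (by norm_num) (by norm_num) (by norm_num))
                (sqrt_le_num _ _ (by norm_num) (by norm_num))
                (by linarith [hc2 1 (by norm_num)]) b1 (by rw [d13]; norm_num)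
            · exact fbound _ (1732051/1000000) _ (1309017/250000) _ _ (by norm_num)
                (num_le_sqrt 1 _ (by norm_num) (by norm_num) (by norm_num))
                (sqrt_le_num _ _ (by norm_num) (by norm_num))
                (by linarith [hc2 2 (by norm_num)]) b2 (by rw [d23]; norm_num)
          · rcases (show k = 1 ∨ k = 2 ∨ k = 3 by omega) with rfl|rfl|rfl
            · exact fbound _ (2) _ (2) _ _ (by norm_num)
                (num_le_sqrt 1 _ (by norm_num) (by norm_num) (by norm_num))
                (sqrt_le_num _ _ (by norm_num) (by norm_num))
                (by linarith [hc2 1 (by norm_num)]) b1 (by rw [d14]; norm_num)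
            · exact fbound _ (2) _ (1309017/250000) _ _ (by norm_num)
                (num_le_sqrt 1 _ (by norm_num) (by norm_num) (by norm_num))
                (sqrt_le_num _ _ (by norm_num) (by norm_num))
                (by linarith [hc2 2 (by norm_num)]) b2 (by rw [d24]; norm_num)
            · exact fbound _ (2) _ (9623123/1000000) _ _ (by norm_num)
                (num_le_sqrt 1 _ (by norm_num) (by norm_num) (by norm_num))
                (sqrt_le_num _ _ (by norm_num) (by norm_num))
                (by linarith [hc2 3 (by norm_num)]) b3 (by rw [d34]; norm_num)
          · rcases (show k = 1 ∨ k = 2 ∨ k = 3 ∨ k = 4 by omega) with rfl|rfl|rfl|rfl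
            · exact fbound _ (559017/250000) _ (2) _ _ (by norm_num)
                (num_le_sqrt 1 _ (by norm_num) (by norm_num) (by norm_num))
                (sqrt_le_num _ _ (by norm_num) (by norm_num))
                (by linarith [hc2 1 (by norm_num)]) b1 (by rw [d15]; norm_num)
            · exact fbound _ (559017/250000) _ (1309017/250000) _ _ (by norm_num)
                (num_le_sqrt 1 _ (by norm_num) (by norm_num) (by norm_num))
                (sqrt_le_num _ _ (by norm_num) (by norm_num))
                (by linarith [hc2 2 (by norm_num)]) b2 (by rw [d25]; norm_num)
            · exact fbound _ (559017/250000) _ (9623123/1000000) _ _ (by norm_num)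
                (num_le_sqrt 1 _ (by norm_num) (by norm_num) (by norm_num))
                (sqrt_le_num _ _ (by norm_num) (by norm_num))
                (by linarith [hc2 3 (by norm_num)]) b3 (by rw [d35]; norm_num)
            · exact fbound _ (559017/250000) _ (7561353/500000) _ _ (by norm_num)
                (num_le_sqrt 1 _ (by norm_num) (by norm_num) (by norm_num))
                (sqrt_le_num _ _ (by norm_num) (by norm_num))
                (by linarith [hc2 4 (by norm_num)]) b4 (by rw [d45]; norm_num)
          · rcases (show k = 1 ∨ k = 2 ∨ k = 3 ∨ k = 4 ∨ k = 5 by omega) with rfl|rfl|rfl|rfl|rfl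
            · exact fbound _ (244949/100000) _ (2) _ _ (by norm_num)
                (num_le_sqrt 1 _ (by norm_num) (by norm_num) (by norm_num))
                (sqrt_le_num _ _ (by norm_num) (by norm_num))
                (by linarith [hc2 1 (by norm_num)]) b1 (by rw [d16]; norm_num)
            · exact fbound _ (244949/100000) _ (1309017/250000) _ _ (by norm_num)
                (num_le_sqrt 1 _ (by norm_num) (by norm_num) (by norm_num))
                (sqrt_le_num _ _ (by norm_num) (by norm_num))
                (by linarith [hc2 2 (by norm_num)]) b2 (by rw [d26]; norm_num)
            · exact fbound _ (244949/100000) _ (9623123/1000000) _ _ (by norm_num)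
                (num_le_sqrt 1 _ (by norm_num) (by norm_num) (by norm_num))
                (sqrt_le_num _ _ (by norm_num) (by norm_num))
                (by linarith [hc2 3 (by norm_num)]) b3 (by rw [d36]; norm_num)
            · exact fbound _ (244949/100000) _ (7561353/500000) _ _ (by norm_num)
                (num_le_sqrt 1 _ (by norm_num) (by norm_num) (by norm_num))
                (sqrt_le_num _ _ (by norm_num) (by norm_num))
                (by linarith [hc2 4 (by norm_num)]) b4 (by rw [d46]; norm_num)
            · exact fbound _ (244949/100000) _ (10856233/500000) _ _ (by norm_num)
                (num_le_sqrt 1 _ (by norm_num) (by norm_num) (by norm_num))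
                (sqrt_le_num _ _ (by norm_num) (by norm_num))
                (by linarith [hc2 5 (by norm_num)]) b5 (by rw [d56]; norm_num)
          · rcases (show k = 1 ∨ k = 2 ∨ k = 3 ∨ k = 4 ∨ k = 5 ∨ k = 6 by omega) with rfl|rfl|rfl|rfl|rfl|rfl
            · exact fbound _ (330719/125000) _ (2) _ _ (by norm_num)
                (num_le_sqrt 1 _ (by norm_num) (by norm_num) (by norm_num))
                (sqrt_le_num _ _ (by norm_num) (by norm_num))
                (by linarith [hc2 1 (by norm_num)]) b1 (by rw [d17]; norm_num)
            · exact fbound _ (330719/125000) _ (1309017/250000) _ _ (by norm_num)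
                (num_le_sqrt 1 _ (by norm_num) (by norm_num) (by norm_num))
                (sqrt_le_num _ _ (by norm_num) (by norm_num))
                (by linarith [hc2 2 (by norm_num)]) b2 (by rw [d27]; norm_num)
            · exact fbound _ (330719/125000) _ (9623123/1000000) _ _ (by norm_num)
                (num_le_sqrt 1 _ (by norm_num) (by norm_num) (by norm_num))
                (sqrt_le_num _ _ (by norm_num) (by norm_num))
                (by linarith [hc2 3 (by norm_num)]) b3 (by rw [d37]; norm_num)
            · exact fbound _ (330719/125000) _ (7561353/500000) _ _ (by norm_num)
                (num_le_sqrt 1 _ (by norm_num) (by norm_num) (by norm_num))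
                (sqrt_le_num _ _ (by norm_num) (by norm_num))
                (by linarith [hc2 4 (by norm_num)]) b4 (by rw [d47]; norm_num)
            · exact fbound _ (330719/125000) _ (10856233/500000) _ _ (by norm_num)
                (num_le_sqrt 1 _ (by norm_num) (by norm_num) (by norm_num))
                (sqrt_le_num _ _ (by norm_num) (by norm_num))
                (by linarith [hc2 5 (by norm_num)]) b5 (by rw [d57]; norm_num)
            · exact fbound _ (330719/125000) _ (2937767/100000) _ _ (by norm_num)
                (num_le_sqrt 1 _ (by norm_num) (by norm_num) (by norm_num))
                (sqrt_le_num _ _ (by norm_num) (by norm_num))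
                (by linarith [hc2 6 (by norm_num)]) b6 (by rw [d67]; norm_num)
        · -- induction step
          have hN8 : 8 ≤ N := by omega
          have hk1N : k ≤ N - 1 := by omega
          have hd := diff (N-1) k hk hk1N
          have hx := IH (N-1) (by omega) k hk hk1N
          have hrk := hrec k N hk hlt
          rw [hrk]
          have hM0 : (0:ℝ) < ((N-1:ℕ):ℝ) := by exact_mod_cast (show 0 < N-1 by omega)
          have hmn : (N:ℝ) = ((N-1:ℕ):ℝ) + 1 := by rw [Nat.cast_sub (by omega)]; norm_num
          have h7 : (7:ℝ) ≤ Real.sqrt ((N-1:ℕ):ℝ)^2 := by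
            rw [Real.sq_sqrt hM0.le]; exact_mod_cast (show 7 ≤ N-1 by omega)
          rcases eq_or_lt_of_le hk with hk1 | hk2
          · rw [← hk1] at hd hx ⊢
            have hy0 : ρ (1-1) (N-1) = 0 := by norm_num [h0]
            refine step_real (ρ 1 (N-1)) (ρ (1-1) (N-1)) (c 1) 0 (Real.sqrt ((N-1:ℕ):ℝ))
              (Real.sqrt (N:ℝ)) ((N-1:ℕ):ℝ) (N:ℝ) ((Real.sq_sqrt hM0.le).symm)
              ((Real.sq_sqrt (by positivity)).symm) hmn (Real.sqrt_pos.2 hM0) (Real.sqrt_nonneg _) h7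
              (by rw [hc1]; norm_num) le_rfl (by rw [hc1]; norm_num) (by rw [hc1]; norm_num)
              hd.1 hd.2 hx ?_
            rw [hy0]
            norm_num
          · have hy := IH (N-1) (by omega) (k-1) (by omega) (by omega)
            exact step_real (ρ k (N-1)) (ρ (k-1) (N-1)) (c k) (c (k-1)) (Real.sqrt ((N-1:ℕ):ℝ))
              (Real.sqrt (N:ℝ)) ((N-1:ℕ):ℝ) (N:ℝ) ((Real.sq_sqrt hM0.le).symm)
              ((Real.sq_sqrt (by positivity)).symm) hmn (Real.sqrt_pos.2 hM0) (Real.sqrt_nonneg _) h7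
              (by linarith [hc2 k hk]) (by linarith [hc2 (k-1) (by omega)])
              (by linarith [hcmono k hk2]) (hcsq k hk2) hd.1 hd.2 hx hy
  intro k N hk hkN
  exact main N k hk hkN
end

section
/- For every real x ≥ 7, the quantity g(x) = (sqrt(1/x) − sqrt(1/(x−1)))/x + (1 − sqrt(1/(x−1)))/(x(x−1)) − (1 − sqrt(1/(x−1)))^2/(x−1)^2 is nonnegative. -/
/-- For `x ≥ 7`,
`g(x) = (√(1/x) - √(1/(x-1)))/x + (1 - √(1/(x-1)))/(x(x-1)) - (1 - √(1/(x-1)))²/(x-1)² ≥ 0`. -/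
theorem stmt_8 (x : ℝ) (hx : 7 ≤ x) :
    0 ≤ (Real.sqrt (1 / x) - Real.sqrt (1 / (x - 1))) / x
      + (1 - Real.sqrt (1 / (x - 1))) / (x * (x - 1))
      - (1 - Real.sqrt (1 / (x - 1))) ^ 2 / (x - 1) ^ 2 := by
  have hx0 : (0:ℝ) < x := by linarith
  have hx1 : (0:ℝ) < x - 1 := by linarith
  set s := Real.sqrt x with hs
  set t := Real.sqrt (x - 1) with ht
  have hs2 : s ^ 2 = x := Real.sq_sqrt hx0.le
  have ht2 : t ^ 2 = x - 1 := Real.sq_sqrt hx1.le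
  have hs0 : 0 < s := Real.sqrt_pos.2 hx0
  have ht0 : 0 < t := Real.sqrt_pos.2 hx1
  have hst : s ^ 2 = t ^ 2 + 1 := by rw [hs2, ht2]; ring
  have h6 : (6:ℝ) ≤ t ^ 2 := by rw [ht2]; linarith
  have ht25 : (61:ℝ)/25 ≤ t := by nlinarith
  have e1 : Real.sqrt (1 / x) = 1 / s := by rw [one_div, Real.sqrt_inv, one_div]
  have e2 : Real.sqrt (1 / (x - 1)) = 1 / t := by rw [one_div, Real.sqrt_inv, one_div]
  rw [e1, e2]
  have ex1 : x - 1 = t ^ 2 := ht2.symm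
  have ex : x = s ^ 2 := hs2.symm
  rw [ex1, ex]
  -- key polynomial inequality
  have hA0 : 0 ≤ t ^ 3 - 2 * t ^ 2 + 2 * t - 1 := by nlinarith
  have hB0 : 0 ≤ s * t * (t ^ 3 - 2 * t ^ 2 + 2 * t - 1) :=
    mul_nonneg (mul_nonneg hs0.le ht0.le) hA0
  have hQ : (2 * t ^ 4 - 3 * t ^ 3 + 3 * t ^ 2 - 2 * t + 1) ^ 2
      ≤ (t ^ 2 + 1) * t ^ 2 * (t ^ 3 - 2 * t ^ 2 + 2 * t - 1) ^ 2 := by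
    nlinarith [pow_nonneg (sub_nonneg.2 ht25) 2, pow_nonneg (sub_nonneg.2 ht25) 3,
      pow_nonneg (sub_nonneg.2 ht25) 4, pow_nonneg (sub_nonneg.2 ht25) 5,
      pow_nonneg (sub_nonneg.2 ht25) 6, pow_nonneg (sub_nonneg.2 ht25) 7,
      pow_nonneg (sub_nonneg.2 ht25) 8, pow_nonneg (sub_nonneg.2 ht25) 9,
      pow_nonneg (sub_nonneg.2 ht25) 10, sub_nonneg.2 ht25]
  have hsq : (2 * t ^ 4 - 3 * t ^ 3 + 3 * t ^ 2 - 2 * t + 1) ^ 2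
      ≤ (s * t * (t ^ 3 - 2 * t ^ 2 + 2 * t - 1)) ^ 2 := by
    calc (2 * t ^ 4 - 3 * t ^ 3 + 3 * t ^ 2 - 2 * t + 1) ^ 2
        ≤ (t ^ 2 + 1) * t ^ 2 * (t ^ 3 - 2 * t ^ 2 + 2 * t - 1) ^ 2 := hQ
      _ = (s * t * (t ^ 3 - 2 * t ^ 2 + 2 * t - 1)) ^ 2 := by
          rw [mul_pow, mul_pow, hst]
  have hkey : 2 * t ^ 4 - 3 * t ^ 3 + 3 * t ^ 2 - 2 * t + 1
      ≤ s * t * (t ^ 3 - 2 * t ^ 2 + 2 * t - 1) :=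
    le_of_pow_le_pow_left₀ two_ne_zero hB0 hsq
  -- multiply through identity
  have hid : (t ^ 5 * (t - s) + s * t ^ 3 * (t - 1) - s ^ 3 * (t - 1) ^ 2) * (s + t)
      = s * t * (t ^ 3 - 2 * t ^ 2 + 2 * t - 1)
        - (2 * t ^ 4 - 3 * t ^ 3 + 3 * t ^ 2 - 2 * t + 1) := by
    linear_combination (-1 + 2*t - 2*t^2 + t^3 - t^5 - s*t + 2*s*t^2 - s*t^3
      - s^2 + 2*s^2*t - s^2*t^2) * hst
  have hP : 0 ≤ t ^ 5 * (t - s) + s * t ^ 3 * (t - 1) - s ^ 3 * (t - 1) ^ 2 := by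
    have hspt : 0 < s + t := by linarith
    nlinarith [hid, hkey, hspt]
  have hexpr : (1 / s - 1 / t) / s ^ 2 + (1 - 1 / t) / (s ^ 2 * t ^ 2)
      - (1 - 1 / t) ^ 2 / (t ^ 2) ^ 2
      = (t ^ 5 * (t - s) + s * t ^ 3 * (t - 1) - s ^ 3 * (t - 1) ^ 2) / (s ^ 3 * t ^ 6) := by
    field_simp
  rw [hexpr]
  exact div_nonneg hP (by positivity)
end

section
/- Let L ≥ 2 be an integer, let λ > 0, and let x_0, x_1, …, x_L be reals with 1 = x_0 ≥ x_1 ≥ x_2 ≥ … ≥ x_L > 0 and with the sum over i = 2,…,L of (i−1) x_i at least λ. Then the sum over i = 1,…,L of x_i^2 / x_{i−1} is at least (λ / L^2)^{4/3}. -/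
/-- If `L ≥ 2`, `λ > 0` and `1 = x₀ ≥ x₁ ≥ … ≥ x_L > 0` with
`∑_{i=2}^{L} (i-1) x_i ≥ λ`, then `∑_{i=1}^{L} x_i²/x_{i-1} ≥ (λ/L²)^{4/3}`. -/
theorem stmt_12 (L : ℕ) (hL : 2 ≤ L) (lam : ℝ) (hlam : 0 < lam) (x : ℕ → ℝ)
    (hx0 : x 0 = 1) (hmono : ∀ i : ℕ, i < L → x (i + 1) ≤ x i) (hpos : 0 < x L)
    (hsum : lam ≤ ∑ i ∈ Finset.Icc 2 L, ((i : ℝ) - 1) * x i) :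
    (lam / (L : ℝ) ^ 2) ^ ((4 : ℝ) / 3) ≤ ∑ i ∈ Finset.Icc 1 L, x i ^ 2 / x (i - 1) := by
  -- monotonicity chain
  have hchain : ∀ i j : ℕ, i ≤ j → j ≤ L → x j ≤ x i := by
    intro i j hij hjL
    induction j with
    | zero => simp_all
    | succ n ih =>
      rcases Nat.lt_or_ge i (n+1) with h | h
      · exact le_trans (hmono n (lt_of_lt_of_le (Nat.lt_succ_self n) hjL))
          (ih (Nat.lt_succ_iff.mp h) (le_trans (Nat.le_succ n) hjL))
      · have : i = n + 1 := le_antisymm hij h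
        simp [this]
  have hposall : ∀ i, i ≤ L → 0 < x i := fun i hi =>
    lt_of_lt_of_le hpos (hchain i L hi le_rfl)
  have hx1 : 0 < x 1 := hposall 1 (le_trans (by norm_num) hL)
  have hx2 : 0 < x 2 := hposall 2 hL
  have hLpos : (0:ℝ) < (L:ℝ)^2 := by positivity
  set t : ℝ := lam / (L:ℝ)^2 with ht_def
  have ht : 0 < t := div_pos hlam hLpos
  -- t ≤ x 2
  have hbound : lam ≤ (L:ℝ)^2 * x 2 := by
    calc lam ≤ ∑ i ∈ Finset.Icc 2 L, ((i : ℝ) - 1) * x i := hsum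
      _ ≤ ∑ i ∈ Finset.Icc 2 L, (L:ℝ) * x 2 := by
          apply Finset.sum_le_sum
          intro i hi
          simp only [Finset.mem_Icc] at hi
          have hiL : (i:ℝ) ≤ (L:ℝ) := by exact_mod_cast hi.2
          have hxi : x i ≤ x 2 := hchain 2 i hi.1 hi.2
          have hxipos : 0 < x i := hposall i hi.2
          have h1 : ((i:ℝ) - 1) ≤ (L:ℝ) := by linarith
          have h0 : (0:ℝ) ≤ (i:ℝ) - 1 := by
            have : (2:ℝ) ≤ (i:ℝ) := by exact_mod_cast hi.1
            linarith
          calc ((i:ℝ) - 1) * x i ≤ (L:ℝ) * x i := by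
                exact mul_le_mul_of_nonneg_right h1 hxipos.le
            _ ≤ (L:ℝ) * x 2 := by
                have : (0:ℝ) ≤ (L:ℝ) := by positivity
                exact mul_le_mul_of_nonneg_left hxi this
      _ = ((Finset.Icc 2 L).card : ℝ) * ((L:ℝ) * x 2) := by
          rw [Finset.sum_const, nsmul_eq_mul]
      _ ≤ (L:ℝ)^2 * x 2 := by
          have hcard : ((Finset.Icc 2 L).card : ℝ) ≤ (L:ℝ) := by
            rw [Nat.card_Icc]
            have : L + 1 - 2 ≤ L := by omega
            exact_mod_cast this
          have : (0:ℝ) ≤ (L:ℝ) * x 2 := by positivity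
          nlinarith
  have ht2 : t ≤ x 2 := by
    rw [ht_def, div_le_iff₀ hLpos]
    linarith
  -- lower bound sum by two terms
  have hsub : ({1, 2} : Finset ℕ) ⊆ Finset.Icc 1 L := by
    intro i hi
    simp only [Finset.mem_insert, Finset.mem_singleton] at hi
    rcases hi with rfl | rfl <;> simp [Finset.mem_Icc] <;> omega
  have htwo : x 1 ^ 2 / x 0 + x 2 ^ 2 / x 1 ≤ ∑ i ∈ Finset.Icc 1 L, x i ^ 2 / x (i - 1) := by
    have hnn : ∀ i ∈ Finset.Icc 1 L, i ∉ ({1, 2} : Finset ℕ) → 0 ≤ x i ^ 2 / x (i - 1) := by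
      intro i hi _
      have hiL : i ≤ L := (Finset.mem_Icc.mp hi).2
      have h1 : 0 < x i := hposall i hiL
      have h2 : 0 < x (i-1) := hposall (i-1) (le_trans (Nat.sub_le i 1) hiL)
      positivity
    have := Finset.sum_le_sum_of_subset_of_nonneg hsub hnn
    simpa using this
  have key : t ^ ((4:ℝ)/3) ≤ x 1 ^ 2 / x 0 + x 2 ^ 2 / x 1 := by
    have ht23 : 0 < t ^ ((2:ℝ)/3) := Real.rpow_pos_of_pos ht _
    rcases le_or_gt (t ^ ((2:ℝ)/3)) (x 1) with h | h
    · -- x1² ≥ t^{4/3}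
      have h1 : t ^ ((4:ℝ)/3) = (t ^ ((2:ℝ)/3)) ^ 2 := by
        rw [← Real.rpow_natCast (t ^ ((2:ℝ)/3)) 2, ← Real.rpow_mul ht.le]
        norm_num
      have h2 : (t ^ ((2:ℝ)/3)) ^ 2 ≤ x 1 ^ 2 := by
        apply sq_le_sq' <;> nlinarith
      have h3 : 0 ≤ x 2 ^ 2 / x 1 := by positivity
      rw [hx0]
      calc t ^ ((4:ℝ)/3) = (t ^ ((2:ℝ)/3)) ^ 2 := h1
        _ ≤ x 1 ^ 2 := h2
        _ = x 1 ^ 2 / 1 := by ring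
        _ ≤ x 1 ^ 2 / 1 + x 2 ^ 2 / x 1 := by linarith
    · -- t²/x1 ≥ t^{4/3}
      have h1 : t ^ ((4:ℝ)/3) = t ^ 2 / t ^ ((2:ℝ)/3) := by
        rw [← Real.rpow_natCast t 2, ← Real.rpow_sub ht]
        norm_num
      have h2 : t ^ 2 / t ^ ((2:ℝ)/3) ≤ t ^ 2 / x 1 :=
        div_le_div_of_nonneg_left (by positivity) hx1 h.le
      have h3 : t ^ 2 / x 1 ≤ x 2 ^ 2 / x 1 := by
        gcongr
      have h4 : 0 ≤ x 1 ^ 2 / x 0 := by rw [hx0]; positivity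
      linarith
  exact le_trans key htwo
end

section
/- For each n, assign to every edge e of the complete graph K_n on vertex set {1,…,n} an independent uniform [0,1] cost X_e. Then the probability that there exist a vertex v and a set S of neighbors of v with |S| = k for some integer k > (log n)^2 such that the sum over w in S of X_{vw} is at most k^2/(3n), tends to 0 as n → ∞. -/
open MeasureTheory

/-- The product probability measure putting an independent uniform `[0,1]` cost on every
(unordered) pair of vertices of the complete graph on `Fin n`; the cost of the edge `{v,w}`
is the coordinate `s(v,w)`. -/
noncomputable def edgeMeasure (n : ℕ) : Measure (Sym2 (Fin n) → ℝ) :=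
  Measure.pi fun _ => volume.restrict (Set.Icc 0 1)

open Real
open scoped ENNReal

theorem lintegral_fin_pi_prod {n : ℕ} {E : Fin n → Type*} [∀ i, MeasurableSpace (E i)]
    (μ : ∀ i, Measure (E i)) [∀ i, SigmaFinite (μ i)] (f : ∀ i, E i → ℝ≥0∞)
    (hf : ∀ i, Measurable (f i)) :
    ∫⁻ x, ∏ i, f i (x i) ∂Measure.pi μ = ∏ i, ∫⁻ x, f i x ∂μ i := by
  induction n with
  | zero => simp [lintegral_one, Measure.pi_empty_univ]
  | succ n ih =>
    have h2 : AEMeasurable (fun y : (j : Fin n) → E (Fin.succ j) => ∏ j, f (Fin.succ j) (y j))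
        (Measure.pi fun j => μ (Fin.succ j)) :=
      (Finset.measurable_prod _ fun j _ => (hf _).comp (measurable_pi_apply j)).aemeasurable
    calc ∫⁻ x, ∏ i, f i (x i) ∂Measure.pi μ
        = ∫⁻ p : E 0 × ((j : Fin n) → E (Fin.succ j)),
            f 0 p.1 * ∏ j : Fin n, f (Fin.succ j) (p.2 j)
            ∂((μ 0).prod (Measure.pi fun j => μ (Fin.succ j))) := by
          rw [← ((measurePreserving_piFinSuccAbove μ 0).symm).lintegral_comp_emb
            (MeasurableEquiv.measurableEmbedding _)]
          refine lintegral_congr fun p => ?_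
          rw [Fin.prod_univ_succ]
          rfl
      _ = (∫⁻ x, f 0 x ∂μ 0) * ∏ j : Fin n, ∫⁻ x, f (Fin.succ j) x ∂μ (Fin.succ j) := by
          rw [lintegral_prod_mul (hf 0).aemeasurable h2, ih _ _ (fun j => hf _)]
      _ = ∏ i, ∫⁻ x, f i x ∂μ i := by rw [Fin.prod_univ_succ]

theorem lintegral_fintype_pi_prod {ι : Type*} [Fintype ι] {α : Type*} [MeasurableSpace α]
    (μ : Measure α) [SigmaFinite μ] (f : ι → α → ℝ≥0∞) (hf : ∀ i, Measurable (f i)) :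
    ∫⁻ x : ι → α, ∏ i, f i (x i) ∂Measure.pi (fun _ => μ) = ∏ i, ∫⁻ x, f i x ∂μ := by
  let e := (Fintype.equivFin ι).symm
  rw [(measurePreserving_piCongrLeft (fun _ : ι => μ) e).lintegral_map_equiv]
  rw [← Equiv.prod_comp e (fun i => ∫⁻ x, f i x ∂μ),
    ← lintegral_fin_pi_prod (fun _ => μ) (fun i' => f (e i')) (fun i' => hf _)]
  refine lintegral_congr fun a => ?_
  rw [← Equiv.prod_comp e (fun i => f i ((MeasurableEquiv.piCongrLeft (fun _ => α) e) a i))]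
  simp only [MeasurableEquiv.coe_piCongrLeft, Equiv.piCongrLeft_apply_apply]

theorem single_coord_bound {θ : ℝ} (h0 : 0 < θ) (h1 : θ ≤ 1) :
    ∫⁻ x, ENNReal.ofReal (Real.exp (θ⁻¹ * max (θ - x) 0)) ∂(volume.restrict (Set.Icc 0 1))
      ≤ ENNReal.ofReal (Real.exp ((Real.exp 1 - 2) * θ)) := by
  have hθ : θ ≠ 0 := ne_of_gt h0
  have hcont : Continuous fun x : ℝ => Real.exp (θ⁻¹ * max (θ - x) 0) :=
    (Real.continuous_exp.comp (continuous_const.mul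
      ((continuous_const.sub continuous_id).max continuous_const)))
  have hint : Integrable (fun x : ℝ => Real.exp (θ⁻¹ * max (θ - x) 0))
      (volume.restrict (Set.Icc 0 1)) := hcont.integrableOn_Icc
  rw [← ofReal_integral_eq_lintegral_ofReal hint
    (Filter.Eventually.of_forall fun x => (Real.exp_pos _).le)]
  apply ENNReal.ofReal_le_ofReal
  have hIcc : ∫ x in Set.Icc (0:ℝ) 1, Real.exp (θ⁻¹ * max (θ - x) 0)
      = ∫ x in (0:ℝ)..1, Real.exp (θ⁻¹ * max (θ - x) 0) := by
    rw [MeasureTheory.integral_Icc_eq_integral_Ioc, intervalIntegral.integral_of_le (by norm_num)]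
  rw [hIcc]
  have hsplit : ∫ x in (0:ℝ)..1, Real.exp (θ⁻¹ * max (θ - x) 0)
      = (∫ x in (0:ℝ)..θ, Real.exp (θ⁻¹ * max (θ - x) 0))
        + ∫ x in θ..(1:ℝ), Real.exp (θ⁻¹ * max (θ - x) 0) :=
    (intervalIntegral.integral_add_adjacent_intervals
      (hcont.intervalIntegrable _ _) (hcont.intervalIntegrable _ _)).symm
  have hpart1 : (∫ x in (0:ℝ)..θ, Real.exp (θ⁻¹ * max (θ - x) 0)) = θ * (Real.exp 1 - 1) := by
    have hcg : Set.EqOn (fun x : ℝ => Real.exp (θ⁻¹ * max (θ - x) 0))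
        (fun x : ℝ => Real.exp (1 - θ⁻¹ * x)) (Set.uIcc 0 θ) := by
      intro x hx
      rw [Set.uIcc_of_le h0.le] at hx
      have hx2 : x ≤ θ := hx.2
      simp only
      rw [max_eq_left (by linarith), mul_sub, inv_mul_cancel₀ hθ]
    rw [intervalIntegral.integral_congr hcg]
    have hderiv : ∀ x ∈ Set.uIcc (0:ℝ) θ, HasDerivAt (fun x => -θ * Real.exp (1 - θ⁻¹ * x))
        (Real.exp (1 - θ⁻¹ * x)) x := by
      intro x _
      have h1 : HasDerivAt (fun x : ℝ => 1 - θ⁻¹ * x) (-θ⁻¹) x := by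
        simpa using ((hasDerivAt_id x).const_mul θ⁻¹).const_sub 1
      have h2 := (h1.exp).const_mul (-θ)
      convert h2 using 1
      · rfl
      · rfl
      · field_simp
    rw [intervalIntegral.integral_eq_sub_of_hasDerivAt hderiv
      ((Real.continuous_exp.comp (continuous_const.sub
        (continuous_const.mul continuous_id))).intervalIntegrable _ _)]
    rw [inv_mul_cancel₀ hθ]
    simp [Real.exp_zero]
    ring
  have hpart2 : (∫ x in θ..(1:ℝ), Real.exp (θ⁻¹ * max (θ - x) 0)) = 1 - θ := by
    have hcg : Set.EqOn (fun x : ℝ => Real.exp (θ⁻¹ * max (θ - x) 0))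
        (fun _ : ℝ => (1:ℝ)) (Set.uIcc θ 1) := by
      intro x hx
      rw [Set.uIcc_of_le h1] at hx
      have hx1 : θ ≤ x := hx.1
      simp only
      rw [max_eq_right (by linarith), mul_zero, Real.exp_zero]
    rw [intervalIntegral.integral_congr hcg, intervalIntegral.integral_const]
    simp
  rw [hsplit, hpart1, hpart2]
  have := Real.add_one_le_exp ((Real.exp 1 - 2) * θ)
  nlinarith [Real.exp_pos (1:ℝ)]

theorem chernoff (n k : ℕ) (hk : 0 < k) (hkn : k < n) (v : Fin n) :
    edgeMeasure n {X | ((k:ℝ))^2/(3*n) ≤ ∑ w ∈ Finset.univ.erase v,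
      max ((2*k/(3*n)) - X s(v,w)) 0}
    ≤ ENNReal.ofReal (Real.exp (-((1/2 - 2*(Real.exp 1 - 2)/3) * k))) := by
  classical
  have hn : 0 < n := lt_trans hk hkn
  have hnR : (0:ℝ) < n := Nat.cast_pos.mpr hn
  have hkR : (0:ℝ) < k := Nat.cast_pos.mpr hk
  set θ : ℝ := 2*k/(3*n) with hθdef
  have hθpos : 0 < θ := by positivity
  have hθ1 : θ ≤ 1 := by
    rw [hθdef, div_le_one (by positivity)]
    have : (k:ℝ) ≤ n := Nat.cast_le.mpr hkn.le
    linarith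
  set a : ℝ := ((k:ℝ))^2/(3*n) with hadef
  set Z : (Sym2 (Fin n) → ℝ) → ℝ :=
    fun X => ∑ w ∈ Finset.univ.erase v, max (θ - X s(v,w)) 0 with hZdef
  have hZm : Measurable Z :=
    Finset.measurable_sum _ fun w _ =>
      ((measurable_const.sub (measurable_pi_apply s(v,w))).max measurable_const)
  set F : (Sym2 (Fin n) → ℝ) → ℝ≥0∞ :=
    fun X => ENNReal.ofReal (Real.exp (θ⁻¹ * Z X)) with hFdef
  have hFm : Measurable F := ((hZm.const_mul θ⁻¹).exp).ennreal_ofReal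
  set ε : ℝ≥0∞ := ENNReal.ofReal (Real.exp (θ⁻¹ * a)) with hεdef
  have hεne0 : ε ≠ 0 := (ENNReal.ofReal_pos.mpr (Real.exp_pos _)).ne'
  have hεnetop : ε ≠ ⊤ := ENNReal.ofReal_ne_top
  have hsub : {X : Sym2 (Fin n) → ℝ | a ≤ Z X} ⊆ {X | ε ≤ F X} := by
    intro X hX
    exact ENNReal.ofReal_le_ofReal (Real.exp_le_exp.mpr
      (mul_le_mul_of_nonneg_left hX (inv_nonneg.mpr hθpos.le)))
  -- the per-coordinate functions
  set T : Finset (Sym2 (Fin n)) := (Finset.univ.erase v).image (fun w => s(v,w)) with hTdef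
  set g : Sym2 (Fin n) → ℝ → ℝ≥0∞ := fun e x =>
    if e ∈ T then ENNReal.ofReal (Real.exp (θ⁻¹ * max (θ - x) 0)) else 1 with hgdef
  have hinj : Set.InjOn (fun w => s(v,w)) (Finset.univ.erase v : Finset (Fin n)) := by
    intro w1 h1 w2 h2 h
    simp only [Sym2.eq, Sym2.rel_iff', Prod.mk.injEq, Prod.swap_prod_mk] at h
    rcases h with ⟨_, h⟩ | ⟨h1', h2'⟩
    · exact h
    · exfalso
      exact (Finset.mem_erase.mp h2).1 h1'.symm
  have hkey : ∀ X : Sym2 (Fin n) → ℝ, F X = ∏ e : Sym2 (Fin n), g e (X e) := by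
    intro X
    have e1 : F X = ∏ w ∈ Finset.univ.erase v,
        ENNReal.ofReal (Real.exp (θ⁻¹ * max (θ - X s(v,w)) 0)) := by
      rw [hFdef, hZdef]
      simp only
      rw [Finset.mul_sum, Real.exp_sum, ENNReal.ofReal_prod_of_nonneg
        (fun w _ => (Real.exp_pos _).le)]
    have e2 : ∏ w ∈ Finset.univ.erase v,
        ENNReal.ofReal (Real.exp (θ⁻¹ * max (θ - X s(v,w)) 0)) = ∏ e ∈ T, g e (X e) := by
      rw [hTdef, Finset.prod_image hinj]
      refine Finset.prod_congr rfl fun w hw => ?_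
      rw [hgdef]
      exact (if_pos (Finset.mem_image_of_mem _ hw)).symm
    have e3 : ∏ e ∈ T, g e (X e) = ∏ e : Sym2 (Fin n), g e (X e) :=
      Finset.prod_subset (Finset.subset_univ T) fun e _ he => by
        rw [hgdef]; simp only [if_neg he]
    rw [e1, e2, e3]
  have hgm : ∀ e, Measurable (g e) := by
    intro e
    rw [hgdef]
    by_cases he : e ∈ T
    · simpa [he] using
        ((((measurable_const.sub measurable_id).max measurable_const).const_mul θ⁻¹).exp).ennreal_ofReal
    · simpa [he] using measurable_const
  have hlint : ∫⁻ X, F X ∂(edgeMeasure n) = ∏ e : Sym2 (Fin n),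
      ∫⁻ x, g e x ∂(volume.restrict (Set.Icc 0 1)) := by
    simp_rw [hkey]
    exact lintegral_fintype_pi_prod _ g hgm
  have hTcard : T.card = n - 1 := by
    rw [hTdef, Finset.card_image_of_injOn hinj, Finset.card_erase_of_mem (Finset.mem_univ v),
      Finset.card_univ, Fintype.card_fin]
  have hprodbound : ∏ e : Sym2 (Fin n), ∫⁻ x, g e x ∂(volume.restrict (Set.Icc 0 1))
      ≤ (ENNReal.ofReal (Real.exp ((Real.exp 1 - 2) * θ))) ^ (n - 1) := by
    have step : ∀ e : Sym2 (Fin n), ∫⁻ x, g e x ∂(volume.restrict (Set.Icc 0 1))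
        ≤ if e ∈ T then ENNReal.ofReal (Real.exp ((Real.exp 1 - 2) * θ)) else 1 := by
      intro e
      by_cases he : e ∈ T
      · simpa [hgdef, he] using single_coord_bound hθpos hθ1
      · simp [hgdef, he, lintegral_one, Measure.restrict_apply_univ, Real.volume_Icc]
    calc ∏ e : Sym2 (Fin n), ∫⁻ x, g e x ∂(volume.restrict (Set.Icc 0 1))
        ≤ ∏ e : Sym2 (Fin n),
          (if e ∈ T then ENNReal.ofReal (Real.exp ((Real.exp 1 - 2) * θ)) else 1) :=
          Finset.prod_le_prod' fun e _ => step e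
      _ = ∏ e ∈ T, ENNReal.ofReal (Real.exp ((Real.exp 1 - 2) * θ)) := by
          refine (Finset.prod_subset (Finset.subset_univ T) fun e _ he => by simp [he]).symm.trans ?_
          exact Finset.prod_congr rfl fun e he => by simp [he]
      _ = (ENNReal.ofReal (Real.exp ((Real.exp 1 - 2) * θ))) ^ (n - 1) := by
          rw [Finset.prod_const, hTcard]
  -- Markov
  have hmain : edgeMeasure n {X | a ≤ Z X} ≤
      (ENNReal.ofReal (Real.exp ((Real.exp 1 - 2) * θ))) ^ (n - 1) / ε := by
    calc edgeMeasure n {X | a ≤ Z X} ≤ edgeMeasure n {X | ε ≤ F X} := measure_mono hsub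
      _ ≤ (∫⁻ X, F X ∂(edgeMeasure n)) / ε :=
          meas_ge_le_lintegral_div hFm.aemeasurable hεne0 hεnetop
      _ ≤ _ := by
          rw [hlint]
          exact ENNReal.div_le_div_right hprodbound ε
  refine hmain.trans ?_
  have hεinv : ε⁻¹ = ENNReal.ofReal (Real.exp (-(θ⁻¹ * a))) := by
    rw [hεdef, ← ENNReal.ofReal_inv_of_pos (Real.exp_pos _), ← Real.exp_neg]
  rw [div_eq_mul_inv, hεinv, ← ENNReal.ofReal_pow (Real.exp_pos _).le,
    ← ENNReal.ofReal_mul (by positivity)]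
  apply ENNReal.ofReal_le_ofReal
  rw [← Real.exp_nat_mul, ← Real.exp_add]
  apply Real.exp_le_exp.mpr
  have h2 : θ⁻¹ * a = k/2 := by
    rw [hθdef, hadef]
    field_simp
  have hnm1 : ((n - 1 : ℕ) : ℝ) ≤ (n : ℝ) := by
    exact_mod_cast Nat.cast_le.mpr (Nat.sub_le n 1)
  have hE2 : (0:ℝ) < Real.exp 1 - 2 := by
    have := Real.exp_one_gt_d9
    norm_num at this ⊢
    linarith
  have hnθ : (n:ℝ) * θ = 2*k/3 := by
    rw [hθdef]; field_simp
  have : ((n - 1 : ℕ) : ℝ) * ((Real.exp 1 - 2) * θ) ≤ (Real.exp 1 - 2) * (2*k/3) := by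
    calc ((n - 1 : ℕ) : ℝ) * ((Real.exp 1 - 2) * θ) ≤ (n:ℝ) * ((Real.exp 1 - 2) * θ) := by
          apply mul_le_mul_of_nonneg_right hnm1 (by positivity)
      _ = (Real.exp 1 - 2) * ((n:ℝ) * θ) := by ring
      _ = (Real.exp 1 - 2) * (2*k/3) := by rw [hnθ]
  rw [h2]
  nlinarith

/-- W.h.p. (as `n → ∞`) there is no star with `k > (log n)²` edges of total
cost at most `k²/(3n)`: the probability that some vertex `v` and some set `S` of `k > (log n)²`
other vertices satisfy `∑_{w ∈ S} X_{vw} ≤ k²/(3n)` tends to `0`. -/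
theorem stmt_13 :
    Filter.Tendsto (fun n : ℕ =>
      edgeMeasure n {X | ∃ (v : Fin n) (S : Finset (Fin n)), v ∉ S ∧
        (Real.log n) ^ 2 < (S.card : ℝ) ∧
        ∑ w ∈ S, X s(v, w) ≤ (S.card : ℝ) ^ 2 / (3 * n)})
      Filter.atTop (nhds 0) := by
  classical
  set c : ℝ := 1/2 - 2*(Real.exp 1 - 2)/3 with hcdef
  have hc : 0 < c := by
    have h9 := Real.exp_one_lt_d9
    rw [hcdef]
    norm_num at h9 ⊢
    linarith
  -- the covering sets
  have hbound : ∀ n : ℕ,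
      edgeMeasure n {X | ∃ (v : Fin n) (S : Finset (Fin n)), v ∉ S ∧
        (Real.log n) ^ 2 < (S.card : ℝ) ∧
        ∑ w ∈ S, X s(v, w) ≤ (S.card : ℝ) ^ 2 / (3 * n)}
      ≤ ENNReal.ofReal ((n:ℝ) * n * Real.exp (-(c * (Real.log n)^2))) := by
    intro n
    set A : Fin n → ℕ → Set (Sym2 (Fin n) → ℝ) := fun v k =>
      {X | ((k:ℝ))^2/(3*n) ≤ ∑ w ∈ Finset.univ.erase v, max ((2*k/(3*n)) - X s(v,w)) 0}
      with hAdef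
    set B : Fin n → ℕ → Set (Sym2 (Fin n) → ℝ) := fun v k =>
      if (Real.log n)^2 < (k:ℝ) then A v k else ∅ with hBdef
    have hsub : {X : Sym2 (Fin n) → ℝ | ∃ (v : Fin n) (S : Finset (Fin n)), v ∉ S ∧
        (Real.log n) ^ 2 < (S.card : ℝ) ∧
        ∑ w ∈ S, X s(v, w) ≤ (S.card : ℝ) ^ 2 / (3 * n)}
        ⊆ ⋃ (v : Fin n), ⋃ k ∈ Finset.range n, B v k := by
      rintro X ⟨v, S, hvS, hcard, hsum⟩
      have hnpos : 0 < n := v.pos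
      have hnR : (0:ℝ) < n := Nat.cast_pos.mpr hnpos
      set k := S.card with hkdef
      have hSsub : S ⊆ Finset.univ.erase v :=
        fun w hw => Finset.mem_erase.mpr ⟨fun h => hvS (h ▸ hw), Finset.mem_univ w⟩
      have hklt : k < n := by
        have h1 : k ≤ (Finset.univ.erase v).card := Finset.card_le_card hSsub
        rw [Finset.card_erase_of_mem (Finset.mem_univ v), Finset.card_univ,
          Fintype.card_fin] at h1
        omega
      refine Set.mem_iUnion.mpr ⟨v, Set.mem_iUnion₂.mpr ⟨k, Finset.mem_range.mpr hklt, ?_⟩⟩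
      rw [hBdef]
      simp only [if_pos hcard]
      rw [hAdef]
      have hstep : (k:ℝ) * (2*k/(3*n)) - (k:ℝ)^2/(3*n) = (k:ℝ)^2/(3*n) := by
        field_simp
        ring
      have h1 : ∑ w ∈ S, ((2*(k:ℝ)/(3*n)) - X s(v,w))
          ≤ ∑ w ∈ S, max ((2*(k:ℝ)/(3*n)) - X s(v,w)) 0 :=
        Finset.sum_le_sum fun w _ => le_max_left _ _
      have h2 : ∑ w ∈ S, max ((2*(k:ℝ)/(3*n)) - X s(v,w)) 0
          ≤ ∑ w ∈ Finset.univ.erase v, max ((2*(k:ℝ)/(3*n)) - X s(v,w)) 0 :=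
        Finset.sum_le_sum_of_subset_of_nonneg hSsub fun w _ _ => le_max_right _ _
      have h3 : ∑ w ∈ S, ((2*(k:ℝ)/(3*n)) - X s(v,w))
          = (k:ℝ) * (2*k/(3*n)) - ∑ w ∈ S, X s(v,w) := by
        rw [Finset.sum_sub_distrib, Finset.sum_const, hkdef, nsmul_eq_mul]
      show ((k:ℝ))^2/(3*n) ≤ _
      have h4 : ((k:ℝ))^2/(3*n) ≤ ∑ w ∈ S, ((2*(k:ℝ)/(3*n)) - X s(v,w)) := by
        rw [h3]
        linarith [hsum]
      linarith
    have hB : ∀ (v : Fin n), ∀ k ∈ Finset.range n,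
        edgeMeasure n (B v k) ≤ ENNReal.ofReal (Real.exp (-(c * (Real.log n)^2))) := by
      intro v k hkr
      rw [hBdef]
      by_cases hcond : (Real.log n)^2 < (k:ℝ)
      · simp only [if_pos hcond]
        have hkpos : 0 < k := by
          by_contra h
          push_neg at h
          interval_cases k
          · simp at hcond
            nlinarith [sq_nonneg (Real.log n)]
        refine (chernoff n k hkpos (Finset.mem_range.mp hkr) v).trans ?_
        apply ENNReal.ofReal_le_ofReal
        apply Real.exp_le_exp.mpr
        rw [neg_le_neg_iff, hcdef]
        exact mul_le_mul_of_nonneg_left hcond.le hc.le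
      · simp only [if_neg hcond]
        simp
    calc edgeMeasure n _ ≤ edgeMeasure n (⋃ (v : Fin n), ⋃ k ∈ Finset.range n, B v k) :=
          measure_mono hsub
      _ ≤ ∑' (v : Fin n), edgeMeasure n (⋃ k ∈ Finset.range n, B v k) := measure_iUnion_le _
      _ = ∑ v : Fin n, edgeMeasure n (⋃ k ∈ Finset.range n, B v k) := tsum_fintype _
      _ ≤ ∑ v : Fin n, ∑ k ∈ Finset.range n, edgeMeasure n (B v k) :=
          Finset.sum_le_sum fun v _ => measure_biUnion_finset_le _ _
      _ ≤ ∑ v : Fin n, ∑ k ∈ Finset.range n,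
            ENNReal.ofReal (Real.exp (-(c * (Real.log n)^2))) :=
          Finset.sum_le_sum fun v _ => Finset.sum_le_sum fun k hk => hB v k hk
      _ = (n:ℝ≥0∞) * ((n:ℝ≥0∞) * ENNReal.ofReal (Real.exp (-(c * (Real.log n)^2)))) := by
          simp [Finset.sum_const, Finset.card_range, Finset.card_univ, mul_assoc]
      _ = ENNReal.ofReal ((n:ℝ) * n * Real.exp (-(c * (Real.log n)^2))) := by
          rw [ENNReal.ofReal_mul (by positivity), ENNReal.ofReal_mul (by positivity),
            ENNReal.ofReal_natCast, mul_assoc]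
  -- the upper bound tends to zero
  have hupper : Filter.Tendsto
      (fun n : ℕ => ENNReal.ofReal ((n:ℝ) * n * Real.exp (-(c * (Real.log n)^2))))
      Filter.atTop (nhds 0) := by
    have hR : Filter.Tendsto (fun n : ℕ => (n:ℝ) * n * Real.exp (-(c * (Real.log n)^2)))
        Filter.atTop (nhds 0) := by
      have h2 : Filter.Tendsto (fun x : ℝ => 2*x - c*x^2) Filter.atTop Filter.atBot := by
        apply Filter.tendsto_atBot_mono' Filter.atTop
          (f₁ := fun x : ℝ => -x)
        · filter_upwards [Filter.eventually_ge_atTop (3/c)] with x hx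
          have hx0 : 0 < x := lt_of_lt_of_le (by positivity) hx
          have : 3 ≤ c * x := by
            rw [div_le_iff₀ hc] at hx
            linarith
          nlinarith
        · exact Filter.tendsto_neg_atTop_atBot
      have h1 : Filter.Tendsto (fun x : ℝ => Real.exp (2*x - c*x^2)) Filter.atTop (nhds 0) :=
        Real.tendsto_exp_atBot.comp h2
      have h3 : Filter.Tendsto (fun n : ℕ => Real.exp (2*(Real.log n) - c*(Real.log n)^2))
          Filter.atTop (nhds 0) :=
        h1.comp (Real.tendsto_log_atTop.comp tendsto_natCast_atTop_atTop)
      refine h3.congr' ?_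
      filter_upwards [Filter.eventually_ge_atTop 1] with n hn
      have hnR : (0:ℝ) < n := by exact_mod_cast hn
      rw [show 2*(Real.log n) - c*(Real.log n)^2
          = Real.log n + (Real.log n + (-(c * (Real.log n)^2))) by ring,
        Real.exp_add, Real.exp_add, Real.exp_log hnR, ← mul_assoc]
    have := (ENNReal.continuous_ofReal.tendsto 0).comp hR
    simpa [Function.comp_def] using this
  refine tendsto_of_tendsto_of_tendsto_of_le_of_le tendsto_const_nhds hupper
    (fun n => zero_le) hbound
end

section
/- Let α = 69/100, β = 7/2, γ = αβ = 2.415, and let x be the real number in the open interval (0,1) satisfying x e^{−x} = γ e^{−γ}. Then (β/2)·(1 − x/γ + x^2/(2γ)) + (2 / ((1−α)(1 − x/γ))) · Σ_{k≥1} (k^{k−3}/k!) γ^{k−1} e^{−γk} < 2.31 < 2 ζ(3), where ζ(3) = Σ_{m≥1} 1/m^3. -/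
open Real

/-! Auxiliary lemmas for Statement 19. -/

private lemma s19_exp415_lb : (1.51436 : ℝ) ≤ Real.exp 0.415 := by
  have h := Real.sum_le_exp_of_nonneg (x := 0.415) (by norm_num) 6
  simp [Finset.sum_range_succ, Nat.factorial] at h
  norm_num at h ⊢
  linarith

private lemma s19_exp415_ub : Real.exp 0.415 ≤ 1.51438 := by
  have h := Real.exp_bound' (x := 0.415) (by norm_num) (by norm_num) (n := 6) (by norm_num)
  simp [Finset.sum_range_succ, Nat.factorial] at h
  norm_num at h ⊢
  linarith

private lemma s19_exp29_ub : Real.exp 0.29 ≤ 1.33644 := by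
  have h := Real.exp_bound' (x := 0.29) (by norm_num) (by norm_num) (n := 5) (by norm_num)
  simp [Finset.sum_range_succ, Nat.factorial] at h
  norm_num at h ⊢
  linarith

private lemma s19_exp28_lb : (1.32311 : ℝ) ≤ Real.exp 0.28 := by
  have h := Real.sum_le_exp_of_nonneg (x := 0.28) (by norm_num) 5
  simp [Finset.sum_range_succ, Nat.factorial] at h
  norm_num at h ⊢
  linarith

private lemma s19_exp2415_lb : (11.189 : ℝ) ≤ Real.exp 2.415 := by
  have h : Real.exp 2.415 = Real.exp 1 * Real.exp 1 * Real.exp 0.415 := by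
    rw [← Real.exp_add, ← Real.exp_add]; norm_num
  have h1 := Real.exp_one_gt_d9
  have h2 := s19_exp415_lb
  have h3 := Real.exp_pos 0.415
  nlinarith

private lemma s19_exp2415_ub : Real.exp 2.415 ≤ 11.19 := by
  have h : Real.exp 2.415 = Real.exp 1 * Real.exp 1 * Real.exp 0.415 := by
    rw [← Real.exp_add, ← Real.exp_add]; norm_num
  have h1 := Real.exp_one_lt_d9
  have h2 := s19_exp415_ub
  have h3 := Real.exp_pos 1
  nlinarith

/-- `t ↦ t e^{-t}` is strictly monotone on `(0, 1]`. -/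
private lemma s19_mono_xe {a b : ℝ} (ha : 0 < a) (hab : a < b) (hb : b ≤ 1) :
    a * Real.exp (-a) < b * Real.exp (-b) := by
  have hden : 0 < 1 - b + a := by linarith
  have h1 : 1 - b + a < Real.exp (a - b) := by
    have := Real.add_one_lt_exp (x := a - b) (by intro h; linarith [sub_eq_zero.mp h])
    linarith
  have hE : Real.exp (a - b) = Real.exp (-b) / Real.exp (-a) := by
    rw [← Real.exp_sub]; ring_nf
  rw [hE, lt_div_iff₀ (Real.exp_pos _)] at h1
  have ea := (Real.exp_pos (-a)).le
  have key : a ≤ b * (1 - b + a) := by nlinarith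
  calc a * Real.exp (-a) ≤ b * (1 - b + a) * Real.exp (-a) :=
        mul_le_mul_of_nonneg_right key ea
    _ = b * ((1 - b + a) * Real.exp (-a)) := by ring
    _ < b * Real.exp (-b) := mul_lt_mul_of_pos_left h1 (by linarith)

/-- `n^n ≤ n! e^n`. -/
private lemma s19_pow_le_fact_mul_exp : ∀ n : ℕ,
    (n : ℝ) ^ n ≤ (Nat.factorial n : ℝ) * Real.exp 1 ^ n := by
  intro n
  induction n with
  | zero => simp
  | succ n ih =>
    have he1 : (1:ℝ) ≤ Real.exp 1 := by
      have := Real.add_one_le_exp (1:ℝ); linarith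
    have key : ((n:ℝ) + 1) ^ n ≤ Real.exp 1 * (n:ℝ) ^ n := by
      rcases Nat.eq_zero_or_pos n with rfl | hn
      · simpa using he1
      · have hnR : (0:ℝ) < n := by exact_mod_cast hn
        have h1 : (n:ℝ) + 1 ≤ (n:ℝ) * Real.exp ((n:ℝ)⁻¹) := by
          have := Real.add_one_le_exp ((n:ℝ)⁻¹)
          have h2 : (n:ℝ) * ((n:ℝ)⁻¹ + 1) ≤ (n:ℝ) * Real.exp ((n:ℝ)⁻¹) :=
            mul_le_mul_of_nonneg_left this hnR.le
          have h3 : (n:ℝ) * ((n:ℝ)⁻¹ + 1) = (n:ℝ) + 1 := by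
            field_simp; ring
          linarith
        calc ((n:ℝ) + 1) ^ n ≤ ((n:ℝ) * Real.exp ((n:ℝ)⁻¹)) ^ n := by
              apply pow_le_pow_left₀ (by positivity) h1
          _ = (n:ℝ) ^ n * Real.exp ((n:ℝ)⁻¹) ^ n := mul_pow _ _ _
          _ = (n:ℝ) ^ n * Real.exp 1 := by
              rw [← Real.exp_nat_mul]
              congr 1
              field_simp
          _ = Real.exp 1 * (n:ℝ) ^ n := by ring
    have hnn : (0:ℝ) ≤ (n:ℝ) + 1 := by positivity
    push_cast
    calc ((n:ℝ) + 1) ^ (n + 1) = ((n:ℝ) + 1) * ((n:ℝ) + 1) ^ n := by ring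
      _ ≤ ((n:ℝ) + 1) * (Real.exp 1 * (n:ℝ) ^ n) := mul_le_mul_of_nonneg_left key hnn
      _ ≤ ((n:ℝ) + 1) * (Real.exp 1 * ((Nat.factorial n : ℝ) * Real.exp 1 ^ n)) := by
          have := mul_le_mul_of_nonneg_left ih (Real.exp_pos 1).le
          exact mul_le_mul_of_nonneg_left this hnn
      _ = ((n:ℝ) + 1) * (Nat.factorial n : ℝ) * Real.exp 1 ^ (n + 1) := by ring
      _ = (Nat.factorial (n + 1) : ℝ) * Real.exp 1 ^ (n + 1) := by
          rw [Nat.factorial_succ]; push_cast; ring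

/-- The general term of the series. -/
private noncomputable def s19F (j : ℕ) : ℝ :=
  ((j:ℝ) + 1) ^ ((j : ℤ) - 2) / (Nat.factorial (j + 1) : ℝ) * 2.415 ^ j *
    Real.exp (-(2.415:ℝ) * ((j:ℝ) + 1))

private lemma s19_term_bound (j : ℕ) :
    s19F j ≤ Real.exp 1 * Real.exp (-2.415) / ((j:ℝ) + 1) ^ 3 *
        (2.415 * (Real.exp 1 * Real.exp (-2.415))) ^ j := by
  have hjp : (0:ℝ) < (j:ℝ) + 1 := by positivity
  have hfp : (0:ℝ) < (Nat.factorial (j+1) : ℝ) := by exact_mod_cast (j+1).factorial_pos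
  have hexp : Real.exp (-(2.415:ℝ) * ((j:ℝ) + 1)) = Real.exp (-2.415) ^ (j+1) := by
    rw [show -(2.415:ℝ) * ((j:ℝ)+1) = ((j+1 : ℕ):ℝ) * (-2.415) by push_cast; ring,
      Real.exp_nat_mul]
  have hzpow : ((j:ℝ) + 1) ^ ((j : ℤ) - 2)
      = ((j:ℝ) + 1) ^ (j+1) / ((j:ℝ) + 1) ^ 3 := by
    rw [show (j:ℤ) - 2 = ((j+1 : ℕ) : ℤ) - ((3:ℕ):ℤ) by push_cast; ring,
      zpow_sub₀ hjp.ne', zpow_natCast, zpow_natCast]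
  have hfact : ((j:ℝ) + 1) ^ (j+1) ≤ (Nat.factorial (j+1) : ℝ) * Real.exp 1 ^ (j+1) := by
    have h := s19_pow_le_fact_mul_exp (j+1)
    push_cast at h
    exact h
  have key : ((j:ℝ)+1)^(j+1) / (Nat.factorial (j+1) : ℝ) ≤ Real.exp 1 ^ (j+1) := by
    rw [div_le_iff₀ hfp]; linarith
  unfold s19F
  rw [hexp, hzpow]
  calc ((j:ℝ)+1)^(j+1) / ((j:ℝ)+1)^3 / (Nat.factorial (j+1) : ℝ) * 2.415^j *
        Real.exp (-2.415) ^ (j+1)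
      = (((j:ℝ)+1)^(j+1) / (Nat.factorial (j+1) : ℝ)) *
        (2.415^j * Real.exp (-2.415) ^ (j+1) / ((j:ℝ)+1)^3) := by ring
    _ ≤ Real.exp 1 ^ (j+1) * (2.415^j * Real.exp (-2.415) ^ (j+1) / ((j:ℝ)+1)^3) :=
        mul_le_mul_of_nonneg_right key (by positivity)
    _ = Real.exp 1 * Real.exp (-2.415) / ((j:ℝ) + 1) ^ 3 *
        (2.415 * (Real.exp 1 * Real.exp (-2.415))) ^ j := by ring

private lemma s19F_nonneg (j : ℕ) : 0 ≤ s19F j := by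
  unfold s19F
  have hjp : (0:ℝ) < (j:ℝ) + 1 := by positivity
  positivity

private lemma s19_c_bound : Real.exp 1 * Real.exp (-2.415) ≤ 0.24295 := by
  rw [Real.exp_neg]
  have h1 := Real.exp_one_lt_d9
  have h2 : (Real.exp 2.415)⁻¹ ≤ (11.189:ℝ)⁻¹ := inv_anti₀ (by norm_num) s19_exp2415_lb
  have h3 : (0:ℝ) < (Real.exp 2.415)⁻¹ := by positivity
  nlinarith

private lemma s19F_le_geom (j : ℕ) : s19F j ≤ 0.24295 * (0.5868:ℝ) ^ j := by
  have hc := s19_c_bound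
  have hc0 : (0:ℝ) ≤ Real.exp 1 * Real.exp (-2.415) := by positivity
  refine (s19_term_bound j).trans ?_
  have hjp : (1:ℝ) ≤ ((j:ℝ) + 1) ^ 3 := by
    have : (0:ℝ) ≤ (j:ℝ) := Nat.cast_nonneg j
    exact one_le_pow₀ (by linarith)
  have hq : (2.415 * (Real.exp 1 * Real.exp (-2.415))) ^ j ≤ (0.5868:ℝ) ^ j := by
    apply pow_le_pow_left₀ (by positivity)
    nlinarith
  have h1 : Real.exp 1 * Real.exp (-2.415) / ((j:ℝ) + 1) ^ 3 ≤ 0.24295 :=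
    (div_le_self hc0 hjp).trans hc
  exact mul_le_mul h1 hq (by positivity) (by norm_num)

private lemma s19F_summable : Summable s19F :=
  Summable.of_nonneg_of_le s19F_nonneg s19F_le_geom
    ((summable_geometric_of_lt_one (by norm_num) (by norm_num)).mul_left _)

private lemma s19F_tail (i : ℕ) : s19F (i + 3) ≤ 0.000768 * (0.5868:ℝ) ^ i := by
  have hc := s19_c_bound
  have hc0 : (0:ℝ) ≤ Real.exp 1 * Real.exp (-2.415) := by positivity
  refine (s19_term_bound (i+3)).trans ?_
  have hiR : (0:ℝ) ≤ (i:ℝ) := Nat.cast_nonneg i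
  have hjp : (64:ℝ) ≤ (((i+3:ℕ):ℝ) + 1) ^ 3 := by
    have h4 : (4:ℝ) ≤ ((i+3:ℕ):ℝ) + 1 := by push_cast; linarith
    calc (64:ℝ) = 4 ^ 3 := by norm_num
      _ ≤ (((i+3:ℕ):ℝ) + 1) ^ 3 := pow_le_pow_left₀ (by norm_num) h4 3
  have h1 : Real.exp 1 * Real.exp (-2.415) / (((i+3:ℕ):ℝ) + 1) ^ 3 ≤ 0.24295 / 64 :=
    div_le_div₀ (by norm_num) hc (by norm_num) hjp
  have hq : (2.415 * (Real.exp 1 * Real.exp (-2.415))) ^ (i+3) ≤ (0.5868:ℝ) ^ (i+3) := by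
    apply pow_le_pow_left₀ (by positivity)
    nlinarith
  calc Real.exp 1 * Real.exp (-2.415) / (((i+3:ℕ):ℝ) + 1) ^ 3 *
        (2.415 * (Real.exp 1 * Real.exp (-2.415))) ^ (i+3)
      ≤ 0.24295 / 64 * (0.5868:ℝ) ^ (i+3) :=
        mul_le_mul h1 hq (by positivity) (by norm_num)
    _ = 0.24295 / 64 * 0.5868 ^ 3 * (0.5868:ℝ) ^ i := by rw [pow_add]; ring
    _ ≤ 0.000768 * (0.5868:ℝ) ^ i :=
        mul_le_mul_of_nonneg_right (by norm_num) (by positivity)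

private lemma s19S_bound : ∑' j, s19F j ≤ 0.0968 := by
  have hsum := s19F_summable
  have hsplit := Summable.sum_add_tsum_nat_add 3 hsum
  have htail : ∑' i, s19F (i + 3) ≤ 0.00186 := by
    have hg : Summable (fun i : ℕ => (0.000768:ℝ) * 0.5868 ^ i) :=
      (summable_geometric_of_lt_one (by norm_num) (by norm_num)).mul_left _
    have h1 : ∑' i, s19F (i + 3) ≤ ∑' i : ℕ, (0.000768:ℝ) * 0.5868 ^ i :=
      Summable.tsum_le_tsum s19F_tail ((summable_nat_add_iff 3).2 hsum) hg
    have h2 : ∑' i : ℕ, (0.000768:ℝ) * 0.5868 ^ i = 0.000768 * (1 - 0.5868)⁻¹ := by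
      rw [tsum_mul_left, tsum_geometric_of_lt_one (by norm_num) (by norm_num)]
    rw [h2] at h1
    refine h1.trans ?_
    norm_num
  have hhead : ∑ i ∈ Finset.range 3, s19F i ≤ 0.09494 := by
    have hE1 : Real.exp (-(483/200:ℝ)) ≤ (11.189:ℝ)⁻¹ := by
      rw [show (-(483/200:ℝ)) = -(2.415:ℝ) by norm_num, Real.exp_neg]
      exact inv_anti₀ (by norm_num) s19_exp2415_lb
    have hE0 : (0:ℝ) ≤ Real.exp (-(483/200:ℝ)) := (Real.exp_pos _).le
    have e2 : Real.exp (-(483/100:ℝ)) =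
        Real.exp (-(483/200:ℝ)) * Real.exp (-(483/200:ℝ)) := by
      rw [← Real.exp_add]; norm_num
    have e3 : Real.exp (-(1449/200:ℝ)) =
        Real.exp (-(483/200:ℝ)) * Real.exp (-(483/200:ℝ)) * Real.exp (-(483/200:ℝ)) := by
      rw [← Real.exp_add, ← Real.exp_add]; norm_num
    simp [Finset.sum_range_succ, s19F, Nat.factorial]
    norm_num
    rw [e2, e3]
    nlinarith [hE1, hE0, mul_le_mul hE1 hE1 hE0 (by norm_num : (0:ℝ) ≤ (11.189:ℝ)⁻¹)]
  linarith

/-- With `α = 69/100`, `β = 7/2`, `γ = αβ = 2.415`, and `x ∈ (0,1)` the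
root of `x e^{-x} = γ e^{-γ}`, the asymptotic expected cost of algorithm BUYTREE,
`(β/2)(1 - x/γ + x²/(2γ)) + (2/((1-α)(1 - x/γ))) ∑_{k≥1} (k^{k-3}/k!) γ^{k-1} e^{-γk}`
(sum written with `k = j+1`), is less than `2.31 < 2 ζ(3)`. -/
theorem stmt_19 (x : ℝ) (hx0 : 0 < x) (hx1 : x < 1)
    (hroot : x * Real.exp (-x) = (2.415 : ℝ) * Real.exp (-(2.415 : ℝ))) :
    ((7 : ℝ) / 2) / 2 * (1 - x / 2.415 + x ^ 2 / (2 * 2.415))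
      + 2 / ((1 - 69 / 100) * (1 - x / 2.415)) *
        ∑' j : ℕ, ((j + 1 : ℝ) ^ ((j : ℤ) - 2) / (Nat.factorial (j + 1) : ℝ) *
          (2.415 : ℝ) ^ j * Real.exp (-(2.415 : ℝ) * (j + 1)))
      < 2.31 ∧ (2.31 : ℝ) < 2 * ∑' m : ℕ, 1 / ((m : ℝ) + 1) ^ 3 := by
  constructor
  · -- bounds on x
    have eA : Real.exp (-(2.415:ℝ)) = (Real.exp 2.415)⁻¹ := Real.exp_neg _
    have pA := Real.exp_pos (2.415:ℝ)
    have hu : (11.19:ℝ)⁻¹ ≤ (Real.exp 2.415)⁻¹ := inv_anti₀ pA s19_exp2415_ub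
    have hu' : (Real.exp 2.415)⁻¹ ≤ (11.189:ℝ)⁻¹ := inv_anti₀ (by norm_num) s19_exp2415_lb
    have h28 : 0.28 ≤ x := by
      by_contra h
      push_neg at h
      have h2 := s19_mono_xe hx0 h (by norm_num)
      rw [hroot, eA, Real.exp_neg] at h2
      have hv : (Real.exp 0.28)⁻¹ ≤ (1.32311:ℝ)⁻¹ := inv_anti₀ (by norm_num) s19_exp28_lb
      nlinarith
    have h29 : x ≤ 0.29 := by
      by_contra h
      push_neg at h
      have h2 := s19_mono_xe (by norm_num : (0:ℝ) < 0.29) h hx1.le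
      rw [hroot, eA, Real.exp_neg] at h2
      have hv : (1.33644:ℝ)⁻¹ ≤ (Real.exp 0.29)⁻¹ := inv_anti₀ (Real.exp_pos _) s19_exp29_ub
      nlinarith
    -- the series
    rw [show (∑' j : ℕ, ((j + 1 : ℝ) ^ ((j : ℤ) - 2) / (Nat.factorial (j + 1) : ℝ) *
          (2.415 : ℝ) ^ j * Real.exp (-(2.415 : ℝ) * (j + 1)))) = ∑' j, s19F j from rfl]
    have hS0 : 0 ≤ ∑' j, s19F j := tsum_nonneg s19F_nonneg
    have hS := s19S_bound
    -- the two summands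
    have hd : (0.8799:ℝ) ≤ 1 - x / 2.415 := by
      have hxd : x / 2.415 ≤ 0.1201 := by
        rw [div_le_iff₀ (by norm_num)]; linarith
      linarith
    have hd0 : (0:ℝ) < 1 - x / 2.415 := by linarith
    have hcoef : 2 / ((1 - 69 / 100) * (1 - x / 2.415)) ≤ 2 / ((1 - 69 / 100) * (0.8799:ℝ)) := by
      gcongr
    have hterm2 : 2 / ((1 - 69 / 100) * (1 - x / 2.415)) * ∑' j, s19F j
        ≤ 2 / ((1 - 69 / 100) * (0.8799:ℝ)) * 0.0968 :=
      mul_le_mul hcoef hS hS0 (by positivity)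
    have h2v : 2 / ((1 - 69 / 100) * (0.8799:ℝ)) * 0.0968 ≤ (0.7098:ℝ) := by norm_num
    have hx2 : x ^ 2 ≤ 0.57 * x - 0.0812 := by
      nlinarith [mul_nonneg (sub_nonneg.2 h28) (sub_nonneg.2 h29)]
    have hterm1 : ((7:ℝ)/2)/2 * (1 - x / 2.415 + x ^ 2 / (2 * 2.415)) ≤ 1.578 := by
      have expand : ((7:ℝ)/2)/2 * (1 - x / 2.415 + x ^ 2 / (2 * 2.415))
          = 7/4 - 7/(4*2.415) * x + 7/(4*2*2.415) * x ^ 2 := by ring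
      rw [expand]
      nlinarith
    linarith
  · -- 2.31 < 2 ζ(3)
    have hz : Summable (fun m : ℕ => 1 / ((m : ℝ) + 1) ^ 3) := by
      have h1 : Summable (fun n : ℕ => 1 / (n : ℝ) ^ 3) :=
        Real.summable_one_div_nat_pow.2 (by norm_num)
      have h2 := (summable_nat_add_iff 1).2 h1
      simpa using h2
    have hpart : ∑ m ∈ Finset.range 3, 1 / ((m : ℝ) + 1) ^ 3
        ≤ ∑' m : ℕ, 1 / ((m : ℝ) + 1) ^ 3 :=
      Summable.sum_le_tsum _ (fun i _ => by positivity) hz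
    simp [Finset.sum_range_succ] at hpart
    norm_num at hpart ⊢
    linarith
end
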